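/- arXiv:2605.07916 — 3 statements merged into one kernel-verified Lean document; each statement's English description precedes it below -/
import Mathlib

section
/- Let A ⊆ 𝔽_p^n have density α ∈ (0,1] and let ε ∈ (0,1). Then there exists a subspace V ≤ 𝔽_p^n with dim(V) ≤ (2/ε²)·log(1/α) such that for every ξ ∉ V one has 𝔼_{y ∈ 𝔽_p^n/V^⊥} | 𝔼_{x ∈ y+V^⊥} 1_A(x)·conj(χ_ξ(x)) | ≤ εα. -/
open scoped Classical BigOperators
open Finset

/-- The character `χ_ξ(x) = e^{2πi⟨ξ,x⟩/p}` on `𝔽_p^n`. -/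
noncomputable def chi (p n : ℕ) [NeZero p] (ξ x : Fin n → ZMod p) : ℂ :=
  Complex.exp (2 * Real.pi * Complex.I * ((∑ i, ξ i * x i : ZMod p).val : ℂ) / p)

/-- Fourier transform `f^(ξ) = 𝔼_x f(x) conj(χ_ξ(x))`. -/
noncomputable def ft (p n : ℕ) [NeZero p] (f : (Fin n → ZMod p) → ℂ) (ξ : Fin n → ZMod p) : ℂ :=
  (∑ x, f x * (starRingEnd ℂ) (chi p n ξ x)) / (p : ℂ) ^ n

/-- indicator of a finset -/
noncomputable def ind {p n : ℕ} [NeZero p] (A : Finset (Fin n → ZMod p)) (x : Fin n → ZMod p) : ℂ :=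
  if x ∈ A then 1 else 0

/-- Orthogonal complement of a subspace w.r.t. the standard bilinear form. -/
def perp (p n : ℕ) [NeZero p] (V : Submodule (ZMod p) (Fin n → ZMod p)) :
    Submodule (ZMod p) (Fin n → ZMod p) where
  carrier := {x | ∀ η ∈ V, ∑ i, x i * η i = 0}
  zero_mem' := by intro η _; simp
  add_mem' := by
    intro a b ha hb η hη
    simpa [add_mul, Finset.sum_add_distrib] using by rw [ha η hη, hb η hη, add_zero]
  smul_mem' := by
    intro c a ha η hη
    have h := ha η hη
    simp only [Pi.smul_apply, smul_eq_mul, mul_assoc, ← Finset.mul_sum]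
    rw [h, mul_zero]



set_option linter.unusedSectionVars false
set_option maxHeartbeats 1000000

private lemma sc_g_mono : MonotoneOn (fun y : ℝ => (y+1) * Real.log y - 2*(y-1)) (Set.Ioi 0) := by
  have hd : ∀ x ∈ Set.Ioi (0:ℝ), HasDerivAt (fun y : ℝ => (y+1) * Real.log y - 2*(y-1))
      (Real.log x + 1/x - 1) x := by
    intro x hx
    have hx0 : x ≠ 0 := ne_of_gt hx
    have h1 : HasDerivAt (fun y : ℝ => (y+1) * Real.log y)
        (1 * Real.log x + (x+1) * x⁻¹) x :=
      (((hasDerivAt_id x).add_const 1).mul (Real.hasDerivAt_log hx0))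
    have h2 : HasDerivAt (fun y : ℝ => 2*(y-1)) 2 x := by
      simpa using ((hasDerivAt_id x).sub_const 1).const_mul 2
    have := h1.sub h2
    exact this.congr_deriv (by rw [add_mul, mul_inv_cancel₀ hx0]; ring)
  refine monotoneOn_of_deriv_nonneg (convex_Ioi 0) ?_ ?_ ?_
  · exact fun x hx => ((hd x hx).continuousAt).continuousWithinAt
  · intro x hx
    rw [interior_Ioi] at hx
    exact (hd x hx).differentiableAt.differentiableWithinAt
  · intro x hx
    rw [interior_Ioi] at hx
    rw [(hd x hx).deriv]
    have hx0 : (0:ℝ) < x := hx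
    have h := Real.log_le_sub_one_of_pos (inv_pos.mpr hx0)
    rw [Real.log_inv] at h
    have : 1 - 1/x ≤ Real.log x := by
      rw [one_div]
      linarith
    linarith

private lemma sc_f_nonneg {x : ℝ} (hx : 0 < x) :
    0 ≤ (x+2)*(x*Real.log x - x + 1) - 3/2*(x-1)^2 := by
  set f : ℝ → ℝ := fun y => (y+2)*(y*Real.log y - y + 1) - 3/2*(y-1)^2 with hf
  have hd : ∀ y ∈ Set.Ioi (0:ℝ), HasDerivAt f (2*((y+1) * Real.log y - 2*(y-1))) y := by
    intro y hy
    have hy0 : y ≠ 0 := ne_of_gt hy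
    have h1 : HasDerivAt (fun z : ℝ => z*Real.log z - z + 1) (Real.log y) y := by
      have := (Real.hasDerivAt_mul_log hy0).sub (hasDerivAt_id y)
      simpa using this.add_const 1
    have h2 : HasDerivAt (fun z : ℝ => (z+2)*(z*Real.log z - z + 1))
        (1*(y*Real.log y - y + 1) + (y+2)*Real.log y) y :=
      ((hasDerivAt_id y).add_const 2).mul h1
    have h3 : HasDerivAt (fun z : ℝ => 3/2*(z-1)^2) (3/2*(2*(y-1))) y := by
      have : HasDerivAt (fun z : ℝ => (z-1)^2) (2*(y-1)) y := by
        exact (((hasDerivAt_id y).sub_const 1).pow 2).congr_deriv (by simp)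
      exact this.const_mul (3/2)
    have := h2.sub h3
    exact this.congr_deriv (by ring)
  have hg1 : ((1:ℝ)+1) * Real.log 1 - 2*(1-1) = 0 := by simp
  have hgsign : ∀ y ∈ Set.Ioi (0:ℝ), (y ≤ 1 → (y+1) * Real.log y - 2*(y-1) ≤ 0)
      ∧ (1 ≤ y → 0 ≤ (y+1) * Real.log y - 2*(y-1)) := by
    intro y hy
    constructor
    · intro hy1
      have := sc_g_mono hy (Set.mem_Ioi.mpr one_pos) hy1
      simpa [hg1] using this
    · intro hy1
      have := sc_g_mono (Set.mem_Ioi.mpr one_pos) hy hy1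
      simpa [hg1] using this
  have hf1 : f 1 = 0 := by simp [hf]
  rcases le_total x 1 with hx1 | hx1
  · -- antitone on Ioc 0 1
    have hanti : AntitoneOn f (Set.Ioc 0 1) := by
      refine antitoneOn_of_deriv_nonpos (convex_Ioc 0 1) ?_ ?_ ?_
      · intro y hy
        exact ((hd y hy.1).continuousAt).continuousWithinAt
      · intro y hy
        rw [interior_Ioc] at hy
        exact (hd y hy.1).differentiableAt.differentiableWithinAt
      · intro y hy
        rw [interior_Ioc] at hy
        rw [(hd y hy.1).deriv]
        have := (hgsign y hy.1).1 (le_of_lt hy.2)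
        linarith
    have := hanti (Set.mem_Ioc.mpr ⟨hx, hx1⟩) (Set.mem_Ioc.mpr ⟨one_pos, le_refl 1⟩) hx1
    rw [hf1] at this
    exact this
  · have hmono : MonotoneOn f (Set.Ici 1) := by
      refine monotoneOn_of_deriv_nonneg (convex_Ici 1) ?_ ?_ ?_
      · intro y hy
        exact ((hd y (lt_of_lt_of_le one_pos hy : (0:ℝ) < y)).continuousAt).continuousWithinAt
      · intro y hy
        rw [interior_Ici] at hy
        exact (hd y (lt_trans one_pos hy : (0:ℝ) < y)).differentiableAt.differentiableWithinAt
      · intro y hy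
        rw [interior_Ici] at hy
        rw [(hd y (lt_trans one_pos hy : (0:ℝ) < y)).deriv]
        have := (hgsign y (lt_trans one_pos hy : (0:ℝ) < y)).2 (le_of_lt hy)
        linarith
    have := hmono (Set.mem_Ici.mpr (le_refl 1)) (Set.mem_Ici.mpr hx1) hx1
    rw [hf1] at this
    exact this

/-- Pointwise Pinsker-type inequality. -/
lemma sc_pointwise {x : ℝ} (hx : 0 ≤ x) :
    3/2 * (x-1)^2 / (x+2) ≤ x * Real.log x - x + 1 := by
  have h2 : (0:ℝ) < x + 2 := by linarith
  rw [div_le_iff₀ h2]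
  rcases eq_or_lt_of_le hx with h | h
  · simp [← h]
    norm_num
  · have := sc_f_nonneg h
    nlinarith [this]

/-- Finite Pinsker-type inequality for a `p`-point refinement. -/
lemma sc_key {ι : Type*} [Fintype ι] [Nonempty ι] (c : ι → ℝ) (hc : ∀ j, 0 ≤ c j) :
    ((∑ j, |c j - (∑ j, c j)/(Fintype.card ι : ℝ)|)/(Fintype.card ι : ℝ))^2
      / (2*((∑ j, c j)/(Fintype.card ι : ℝ)))
    ≤ (∑ j, c j * Real.log (c j))/(Fintype.card ι : ℝ)
      - ((∑ j, c j)/(Fintype.card ι : ℝ)) * Real.log ((∑ j, c j)/(Fintype.card ι : ℝ)) := by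
  set P : ℝ := (Fintype.card ι : ℝ) with hP
  have hP0 : 0 < P := by
    rw [hP]
    exact_mod_cast Fintype.card_pos
  set a : ℝ := (∑ j, c j)/P with ha
  have ha0 : 0 ≤ a := div_nonneg (Finset.sum_nonneg fun j _ => hc j) hP0.le
  rcases eq_or_lt_of_le ha0 with h0 | h0
  · -- a = 0 : all c j = 0
    have hsum : ∑ j, c j = 0 := by
      have : (∑ j, c j) = a * P := by rw [ha, div_mul_cancel₀ _ (ne_of_gt hP0)]
      rw [this, ← h0]; ring
    have hall : ∀ j ∈ (univ : Finset ι), c j = 0 :=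
      (Finset.sum_eq_zero_iff_of_nonneg (fun j _ => hc j)).mp hsum
    have h1 : ∀ j ∈ (univ : Finset ι), |c j - a| = 0 := by
      intro j hj; rw [hall j hj, ← h0]; simp
    have h2 : ∀ j ∈ (univ : Finset ι), c j * Real.log (c j) = 0 := by
      intro j hj; rw [hall j hj]; simp
    rw [Finset.sum_eq_zero h1, Finset.sum_eq_zero h2, ← h0]
    simp
  · -- a > 0
    set x : ι → ℝ := fun j => c j / a with hx
    have hx0 : ∀ j, 0 ≤ x j := fun j => div_nonneg (hc j) h0.le
    have hs0 : 0 < ∑ j, c j := by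
      have := mul_pos h0 hP0
      rw [ha, div_mul_cancel₀ _ (ne_of_gt hP0)] at this
      exact this
    have hsx : ∑ j, x j = P := by
      rw [← Finset.sum_div, ha, div_div_eq_mul_div, mul_comm, mul_div_assoc,
        div_self (ne_of_gt hs0), mul_one]
    have hstep1 : ∑ j, (3/2 * (x j - 1)^2 / (x j + 2)) ≤ ∑ j, (x j * Real.log (x j) - x j + 1) :=
      Finset.sum_le_sum fun j _ => sc_pointwise (hx0 j)
    have hterm : ∀ j, x j * Real.log (x j) = (c j * Real.log (c j) - c j * Real.log a) / a := by
      intro j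
      rcases eq_or_lt_of_le (hc j) with hcj | hcj
      · rw [hx]; simp [← hcj]
      · rw [hx]
        rw [Real.log_div (ne_of_gt hcj) (ne_of_gt h0)]
        field_simp
    have hsum3 : ∑ j, x j * Real.log (x j) = (∑ j, c j * Real.log (c j)) / a - P * Real.log a := by
      simp only [hterm]
      rw [← Finset.sum_div, Finset.sum_sub_distrib, ← Finset.sum_mul]
      have : (∑ j, c j) = a * P := by rw [ha, div_mul_cancel₀ _ (ne_of_gt hP0)]
      rw [this]
      field_simp
    -- Cauchy-Schwarz
    set S : ℝ := ∑ j, |x j - 1| with hS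
    have hCS : S^2 ≤ (∑ j, (x j - 1)^2/(x j + 2)) * (3 * P) := by
      have h1 : ∀ j, |x j - 1| = (|x j - 1|/Real.sqrt (x j + 2)) * Real.sqrt (x j + 2) := by
        intro j
        have : Real.sqrt (x j + 2) ≠ 0 := by
          refine ne_of_gt (Real.sqrt_pos.mpr ?_)
          have := hx0 j; linarith
        field_simp
      have h2 := Finset.sum_mul_sq_le_sq_mul_sq univ
        (fun j => |x j - 1|/Real.sqrt (x j + 2)) (fun j => Real.sqrt (x j + 2))
      have h3 : ∑ j, (|x j - 1|/Real.sqrt (x j + 2)) * Real.sqrt (x j + 2) = S := by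
        rw [hS]; exact Finset.sum_congr rfl fun j _ => (h1 j).symm
      have h4 : ∀ j, (|x j - 1|/Real.sqrt (x j + 2))^2 = (x j - 1)^2/(x j + 2) := by
        intro j
        have hpos : (0:ℝ) ≤ x j + 2 := by have := hx0 j; linarith
        rw [div_pow, sq_abs, Real.sq_sqrt hpos]
      have h5 : ∑ j, (Real.sqrt (x j + 2))^2 = 3 * P := by
        have : ∀ j, (Real.sqrt (x j + 2))^2 = x j + 2 := by
          intro j
          have hpos : (0:ℝ) ≤ x j + 2 := by have := hx0 j; linarith
          exact Real.sq_sqrt hpos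
        simp only [this]
        rw [Finset.sum_add_distrib, hsx]
        simp [mul_comm]
        ring
      calc S^2 = (∑ j, (|x j - 1|/Real.sqrt (x j + 2)) * Real.sqrt (x j + 2))^2 := by rw [h3]
        _ ≤ (∑ j, (|x j - 1|/Real.sqrt (x j + 2))^2) * (∑ j, (Real.sqrt (x j + 2))^2) := h2
        _ = (∑ j, (x j - 1)^2/(x j + 2)) * (3 * P) := by
            rw [h5]; congr 1; exact Finset.sum_congr rfl fun j _ => h4 j
    -- combine
    have hsum1rhs : ∑ j, (x j * Real.log (x j) - x j + 1) =
        (∑ j, c j * Real.log (c j)) / a - P * Real.log a := by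
      rw [Finset.sum_add_distrib, Finset.sum_sub_distrib, hsum3, hsx, Finset.sum_const,
        Finset.card_univ, nsmul_eq_mul, mul_one, ← hP]
      ring
    have hsum1lhs : S^2/(2*P) ≤ ∑ j, (3/2 * (x j - 1)^2 / (x j + 2)) := by
      have h6 : ∑ j, (3/2 * (x j - 1)^2 / (x j + 2)) = 3/2 * ∑ j, ((x j - 1)^2 / (x j + 2)) := by
        rw [Finset.mul_sum]; exact Finset.sum_congr rfl fun j _ => by ring
      rw [h6]
      have h7 : S^2 / (3*P) ≤ ∑ j, ((x j - 1)^2 / (x j + 2)) := by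
        rw [div_le_iff₀ (by positivity)]
        linarith [hCS]
      calc S^2/(2*P) = 3/2 * (S^2/(3*P)) := by field_simp
        _ ≤ 3/2 * ∑ j, ((x j - 1)^2 / (x j + 2)) := by linarith [h7]
    have hmain : S^2/(2*P) ≤ (∑ j, c j * Real.log (c j)) / a - P * Real.log a := by
      calc S^2/(2*P) ≤ ∑ j, (3/2 * (x j - 1)^2 / (x j + 2)) := hsum1lhs
        _ ≤ ∑ j, (x j * Real.log (x j) - x j + 1) := hstep1
        _ = (∑ j, c j * Real.log (c j)) / a - P * Real.log a := hsum1rhs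
    -- rescale : multiply by a/P
    have hST : S = (∑ j, |c j - a|) / a := by
      rw [hS, Finset.sum_div]
      refine Finset.sum_congr rfl fun j _ => ?_
      show |c j / a - 1| = |c j - a| / a
      rw [← abs_of_pos h0, ← abs_div]
      congr 1
      rw [abs_of_pos h0]
      field_simp
    set T : ℝ := ∑ j, |c j - a| with hT
    have hfin : (T/P)^2/(2*a) ≤ (∑ j, c j * Real.log (c j))/P - a * Real.log a := by
      have := mul_le_mul_of_nonneg_left hmain (le_of_lt (div_pos h0 hP0) : (0:ℝ) ≤ a/P)
      calc (T/P)^2/(2*a) = a/P * (S^2/(2*P)) := by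
            rw [hST]
            field_simp
        _ ≤ a/P * ((∑ j, c j * Real.log (c j)) / a - P * Real.log a) := this
        _ = (∑ j, c j * Real.log (c j))/P - a * Real.log a := by
            field_simp
    exact hfin
namespace SC

variable {p n : ℕ} [NeZero p]

lemma mem_perp {V : Submodule (ZMod p) (Fin n → ZMod p)} {x : Fin n → ZMod p} :
    x ∈ perp p n V ↔ ∀ η ∈ V, ∑ i, x i * η i = 0 := Iff.rfl

/-- the linear functional `y ↦ ∑ x i * y i`. -/
def dotL (p n : ℕ) [NeZero p] (x : Fin n → ZMod p) :
    (Fin n → ZMod p) →ₗ[ZMod p] ZMod p where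
  toFun y := ∑ i, x i * y i
  map_add' a b := by simp [mul_add, Finset.sum_add_distrib]
  map_smul' c a := by
    simp only [Pi.smul_apply, smul_eq_mul, RingHom.id_apply, Finset.mul_sum]
    exact Finset.sum_congr rfl fun i _ => by ring

lemma mem_perp_iff_dotL {V : Submodule (ZMod p) (Fin n → ZMod p)} {x : Fin n → ZMod p} :
    x ∈ perp p n V ↔ V ≤ LinearMap.ker (dotL p n x) := by
  constructor
  · intro h η hη; exact h η hη
  · intro h η hη; exact h hη

lemma perp_bot : perp p n (⊥ : Submodule (ZMod p) (Fin n → ZMod p)) = ⊤ := by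
  ext x
  simp only [Submodule.mem_top, iff_true]
  intro η hη
  rw [Submodule.mem_bot] at hη
  simp [hη]

lemma mem_perp_sup_span {V : Submodule (ZMod p) (Fin n → ZMod p)} {ξ w : Fin n → ZMod p} :
    w ∈ perp p n (V ⊔ Submodule.span (ZMod p) {ξ}) ↔
      w ∈ perp p n V ∧ ∑ i, w i * ξ i = 0 := by
  rw [mem_perp_iff_dotL, sup_le_iff, mem_perp_iff_dotL, Submodule.span_le,
    Set.singleton_subset_iff]
  exact Iff.rfl.and (by simp [LinearMap.mem_ker, dotL])

/-- `x ↦ dotL x` as a linear map into the dual. -/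
def toDualL (p n : ℕ) [NeZero p] :
    (Fin n → ZMod p) →ₗ[ZMod p] Module.Dual (ZMod p) (Fin n → ZMod p) where
  toFun x := dotL p n x
  map_add' a b := by
    apply LinearMap.ext; intro y
    simp [dotL, add_mul, Finset.sum_add_distrib]
  map_smul' c a := by
    apply LinearMap.ext; intro y
    simp only [dotL, LinearMap.coe_mk, AddHom.coe_mk, RingHom.id_apply, LinearMap.smul_apply,
      smul_eq_mul, Finset.mul_sum]
    exact Finset.sum_congr rfl fun i _ => by simp; ring

lemma exists_perp_pairing (hp : p.Prime) (V : Submodule (ZMod p) (Fin n → ZMod p))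
    {ξ : Fin n → ZMod p} (hξ : ξ ∉ V) :
    ∃ w, w ∈ perp p n V ∧ ∑ i, w i * ξ i ≠ 0 := by
  haveI := Fact.mk hp
  by_contra hcon
  push_neg at hcon
  apply hξ
  have hV : (Submodule.dualAnnihilator V).dualCoannihilator = V :=
    Subspace.dualAnnihilator_dualCoannihilator_eq
  rw [← hV, Submodule.mem_dualCoannihilator]
  intro φ hφ
  -- φ = toDualL x for some x
  have hsingle : ∀ (x : Fin n → ZMod p) (i : Fin n), (toDualL p n x) (Pi.single i 1) = x i := by
    intro x i
    have hrfl : (toDualL p n x) (Pi.single i 1) = ∑ j, x j * (Pi.single i (1 : ZMod p) : Fin n → ZMod p) j := rfl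
    rw [hrfl]
    have : ∀ j, x j * (Pi.single i (1 : ZMod p) : Fin n → ZMod p) j = if j = i then x j else 0 := by
      intro j
      rcases eq_or_ne j i with h | h
      · subst h; simp
      · simp [Pi.single_apply, h]
    simp only [this]
    rw [Finset.sum_ite_eq' univ i (fun j => x j)]
    simp
  have hsurj : Function.Surjective (toDualL p n) := by
    have hinj : Function.Injective (toDualL p n) := by
      intro a b hab
      funext i
      rw [← hsingle a i, ← hsingle b i, hab]
    exact (LinearMap.injective_iff_surjective_of_finrank_eq_finrank
      Subspace.dual_finrank_eq.symm).mp hinj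
  obtain ⟨x, hx⟩ := hsurj φ
  have hxperp : x ∈ perp p n V := by
    intro η hη
    have := (Submodule.mem_dualAnnihilator φ).mp hφ η hη
    rw [← hx] at this
    exact this
  rw [← hx]
  exact hcon x hxperp

end SC
namespace SC

variable {p n : ℕ} [NeZero p]

lemma rank_sup_span (hp : p.Prime) {V : Submodule (ZMod p) (Fin n → ZMod p)}
    {ξ : Fin n → ZMod p} (hξ : ξ ∉ V) :
    Module.finrank (ZMod p) ↥(V ⊔ Submodule.span (ZMod p) {ξ})
      = Module.finrank (ZMod p) ↥V + 1 := by
  haveI := Fact.mk hp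
  have hξ0 : ξ ≠ 0 := fun h => hξ (h ▸ V.zero_mem)
  have hinf : V ⊓ Submodule.span (ZMod p) {ξ} = ⊥ := by
    ext x
    simp only [Submodule.mem_inf, Submodule.mem_bot]
    constructor
    · rintro ⟨hxV, hxs⟩
      obtain ⟨c, rfl⟩ := Submodule.mem_span_singleton.mp hxs
      rcases eq_or_ne c 0 with rfl | hc
      · simp
      · exfalso
        apply hξ
        have h2 := V.smul_mem c⁻¹ hxV
        rwa [smul_smul, inv_mul_cancel₀ hc, one_smul] at h2
    · rintro rfl
      exact ⟨V.zero_mem, Submodule.zero_mem _⟩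
  have h := Submodule.finrank_sup_add_finrank_inf_eq V (Submodule.span (ZMod p) {ξ})
  rw [hinf, finrank_bot, finrank_span_singleton hξ0] at h
  omega

variable (A : Finset (Fin n → ZMod p))

/-- number of points of `A` in the coset `t + W`, as a real. -/
noncomputable def cnt (W : Submodule (ZMod p) (Fin n → ZMod p)) (t : Fin n → ZMod p) : ℝ :=
  ∑ w : W, if t + (w : Fin n → ZMod p) ∈ A then (1:ℝ) else 0

lemma cnt_nonneg (W : Submodule (ZMod p) (Fin n → ZMod p)) (t : Fin n → ZMod p) :
    0 ≤ cnt A W t :=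
  Finset.sum_nonneg fun w _ => by positivity

lemma cnt_le_card (W : Submodule (ZMod p) (Fin n → ZMod p)) (t : Fin n → ZMod p) :
    cnt A W t ≤ (Fintype.card W : ℝ) := by
  rw [← Finset.card_univ, Finset.card_eq_sum_ones, Nat.cast_sum]
  refine Finset.sum_le_sum fun w _ => ?_
  split <;> norm_num

lemma cnt_shift {W : Submodule (ZMod p) (Fin n → ZMod p)} {w' : Fin n → ZMod p}
    (hw' : w' ∈ W) (t : Fin n → ZMod p) :
    cnt A W (t + w') = cnt A W t := by
  unfold cnt
  refine Fintype.sum_equiv (Equiv.addLeft (⟨w', hw'⟩ : W)) _ _ fun w => ?_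
  congr 2
  show t + w' + (w : Fin n → ZMod p) = t + ((⟨w', hw'⟩ : W) + w : W)
  push_cast
  rw [add_assoc]

lemma sum_cnt (W : Submodule (ZMod p) (Fin n → ZMod p)) :
    ∑ t, cnt A W t = (Fintype.card W : ℝ) * A.card := by
  unfold cnt
  rw [Finset.sum_comm]
  have h1 : ∀ w : W, (∑ t, if t + (w : Fin n → ZMod p) ∈ A then (1:ℝ) else 0)
      = (A.card : ℝ) := by
    intro w
    rw [Fintype.sum_equiv (Equiv.addRight (w : Fin n → ZMod p))
      (fun t => if t + (w : Fin n → ZMod p) ∈ A then (1:ℝ) else 0)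
      (fun t => if t ∈ A then (1:ℝ) else 0) (fun t => rfl)]
    rw [Finset.sum_ite_mem, Finset.univ_inter, Finset.sum_const, nsmul_eq_mul, mul_one]
  rw [Finset.sum_congr rfl fun w _ => h1 w, Finset.sum_const, nsmul_eq_mul, Finset.card_univ]

/-- inner product matching `chi`. -/
def inn (ξ x : Fin n → ZMod p) : ZMod p := ∑ i, ξ i * x i

lemma inn_add (ξ x y : Fin n → ZMod p) : inn ξ (x + y) = inn ξ x + inn ξ y := by
  unfold inn
  rw [← Finset.sum_add_distrib]
  exact Finset.sum_congr rfl fun i _ => by simp [mul_add]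

/-- value of `conj (chi ξ x)` as a function of `⟨ξ,x⟩`. -/
noncomputable def nu (p : ℕ) [NeZero p] (k : ZMod p) : ℂ :=
  (starRingEnd ℂ) (Complex.exp (2 * Real.pi * Complex.I * (k.val : ℂ) / p))

lemma conj_chi (ξ x : Fin n → ZMod p) :
    (starRingEnd ℂ) (chi p n ξ x) = nu p (inn ξ x) := rfl

lemma nu_abs (k : ZMod p) : ‖nu p k‖ = 1 := by
  unfold nu
  rw [Complex.norm_conj]
  have h : 2 * (Real.pi:ℂ) * Complex.I * (k.val : ℂ) / p
      = ((2 * Real.pi * k.val / p : ℝ) : ℂ) * Complex.I := by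
    push_cast
    ring
  rw [h, Complex.norm_exp_ofReal_mul_I]

lemma nu_sum (hp : p.Prime) : ∑ k : ZMod p, nu p k = 0 := by
  unfold nu
  rw [← map_sum]
  have h : ∑ k : ZMod p, Complex.exp (2 * Real.pi * Complex.I * ((k : ZMod p).val : ℂ) / p)
      = ∑ j ∈ Finset.range p, Complex.exp (2 * Real.pi * Complex.I / p) ^ j := by
    refine Finset.sum_nbij' (fun k => (k : ZMod p).val) (fun j => (j : ZMod p)) ?_ ?_ ?_ ?_ ?_
    · intro k _; exact Finset.mem_range.mpr (ZMod.val_lt k)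
    · intro j _; exact Finset.mem_univ _
    · intro k _; exact ZMod.natCast_rightInverse k
    · intro j hj; exact ZMod.val_cast_of_lt (Finset.mem_range.mp hj)
    · intro k _
      rw [← Complex.exp_nat_mul]
      congr 1
      ring
  rw [h]
  have hζ : IsPrimitiveRoot (Complex.exp (2 * Real.pi * Complex.I / p)) p := by
    have := Complex.isPrimitiveRoot_exp p (NeZero.ne p)
    convert this using 2
  rw [hζ.geom_sum_eq_zero hp.one_lt]
  simp

lemma nu_sum_shift (hp : p.Prime) (c : ZMod p) : ∑ k : ZMod p, nu p (c + k) = 0 := by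
  rw [Fintype.sum_equiv (Equiv.addLeft c) (fun k => nu p (c + k)) (nu p) (fun k => rfl)]
  exact nu_sum hp

end SC
namespace SC

variable {p n : ℕ} [NeZero p]


/-- the ambient pairing `x ↦ ∑ x i * ξ i`. -/
def pa (ξ x : Fin n → ZMod p) : ZMod p := ∑ i, x i * ξ i

lemma pa_add (ξ x y : Fin n → ZMod p) : pa ξ (x + y) = pa ξ x + pa ξ y := by
  unfold pa
  rw [← Finset.sum_add_distrib]
  exact Finset.sum_congr rfl fun i _ => by simp [add_mul]

lemma pa_sub (ξ x y : Fin n → ZMod p) : pa ξ (x - y) = pa ξ x - pa ξ y := by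
  unfold pa
  rw [← Finset.sum_sub_distrib]
  exact Finset.sum_congr rfl fun i _ => by simp [sub_mul]

lemma pa_smul (ξ : Fin n → ZMod p) (c : ZMod p) (x : Fin n → ZMod p) :
    pa ξ (c • x) = c * pa ξ x := by
  unfold pa
  rw [Finset.mul_sum]
  exact Finset.sum_congr rfl fun i _ => by simp [mul_assoc]

/-- the finset of a submodule -/
noncomputable def fs (W : Submodule (ZMod p) (Fin n → ZMod p)) : Finset (Fin n → ZMod p) :=
  Finset.univ.filter (· ∈ W)

lemma mem_fs {W : Submodule (ZMod p) (Fin n → ZMod p)} {x : Fin n → ZMod p} :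
    x ∈ fs W ↔ x ∈ W := by simp [fs]

lemma sum_subtype_fs {M : Type*} [AddCommMonoid M] (W : Submodule (ZMod p) (Fin n → ZMod p))
    (f : (Fin n → ZMod p) → M) :
    ∑ w : W, f (w : Fin n → ZMod p) = ∑ x ∈ fs W, f x :=
  (Finset.sum_subtype (fs W) (fun x => mem_fs) f).symm

lemma card_fs (W : Submodule (ZMod p) (Fin n → ZMod p)) :
    (fs W).card = Fintype.card W := by
  rw [fs]
  exact (Fintype.card_subtype _).symm

section Fiber

variable {V : Submodule (ZMod p) (Fin n → ZMod p)} {ξ : Fin n → ZMod p}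

/-- fiber decomposition: a fiber of the pairing over `perp V` is a translate of `perp (V ⊔ ⟨ξ⟩)`. -/
lemma fiber_sum {M : Type*} [AddCommMonoid M] {j : ZMod p} {w : Fin n → ZMod p}
    (hw : w ∈ perp p n V) (hwj : pa ξ w = j) (f : (Fin n → ZMod p) → M) :
    ∑ x ∈ (fs (perp p n V)).filter (fun x => pa ξ x = j), f x
      = ∑ y ∈ fs (perp p n (V ⊔ Submodule.span (ZMod p) {ξ})), f (w + y) := by
  refine Finset.sum_nbij' (fun x => x - w) (fun y => w + y) ?_ ?_ ?_ ?_ ?_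
  · intro x hx
    rw [Finset.mem_filter, mem_fs] at hx
    rw [mem_fs, mem_perp_sup_span]
    constructor
    · exact Submodule.sub_mem _ hx.1 hw
    · show pa ξ (x - w) = 0
      rw [pa_sub, hx.2, hwj, sub_self]
  · intro y hy
    rw [mem_fs, mem_perp_sup_span] at hy
    rw [Finset.mem_filter, mem_fs]
    refine ⟨Submodule.add_mem _ hw hy.1, ?_⟩
    show pa ξ (w + y) = j
    have hy2 : pa ξ y = 0 := hy.2
    rw [pa_add, hwj, hy2, add_zero]
  · intro x _; funext i; simp
  · intro y _; funext i; simp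
  · intro x _; congr 1; funext i; simp

/-- surjectivity of the pairing on `perp V` when `ξ ∉ V`. -/
lemma pa_surj (hp : p.Prime) (hξ : ξ ∉ V) (j : ZMod p) :
    ∃ w ∈ perp p n V, pa ξ w = j := by
  haveI := Fact.mk hp
  obtain ⟨w₀, hw₀, hw₀0⟩ := exists_perp_pairing hp V hξ
  refine ⟨(j * (pa ξ w₀)⁻¹) • w₀, Submodule.smul_mem _ _ hw₀, ?_⟩
  have hne : pa ξ w₀ ≠ 0 := hw₀0
  rw [pa_smul, mul_assoc, inv_mul_cancel₀ hne, mul_one]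

end Fiber

end SC

namespace SC

variable {p n : ℕ} [NeZero p]

lemma inn_eq_pa (ξ x : Fin n → ZMod p) : inn ξ x = pa ξ x :=
  Finset.sum_congr rfl fun i _ => mul_comm _ _

/-- the inner (unnormalised) exponential sum from the theorem. -/
noncomputable def Tt (A : Finset (Fin n → ZMod p)) (V : Submodule (ZMod p) (Fin n → ZMod p))
    (ξ t : Fin n → ZMod p) : ℂ :=
  ∑ w : perp p n V, ind A (t + (w : Fin n → ZMod p)) *
    (starRingEnd ℂ) (chi p n ξ (t + (w : Fin n → ZMod p)))

/-- entropy-type potential. -/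
noncomputable def Psi (A : Finset (Fin n → ZMod p))
    (V : Submodule (ZMod p) (Fin n → ZMod p)) : ℝ :=
  ∑ t, (cnt A (perp p n V) t / (Fintype.card (perp p n V) : ℝ)) *
    Real.log (cnt A (perp p n V) t / (Fintype.card (perp p n V) : ℝ))

/-- fine fiber counts. -/
noncomputable def Nf (A : Finset (Fin n → ZMod p)) (V : Submodule (ZMod p) (Fin n → ZMod p))
    (ξ : Fin n → ZMod p) (j : ZMod p) (t : Fin n → ZMod p) : ℝ :=
  ∑ x ∈ (fs (perp p n V)).filter (fun x => pa ξ x = j), (if t + x ∈ A then (1:ℝ) else 0)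

section Increment

variable (A : Finset (Fin n → ZMod p)) (V : Submodule (ZMod p) (Fin n → ZMod p))
  (ξ : Fin n → ZMod p)

lemma cnt_eq_fs (U : Submodule (ZMod p) (Fin n → ZMod p)) (t : Fin n → ZMod p) :
    cnt A U t = ∑ x ∈ fs U, (if t + x ∈ A then (1:ℝ) else 0) :=
  sum_subtype_fs U (fun x => if t + x ∈ A then (1:ℝ) else 0)

lemma Nf_nonneg (j : ZMod p) (t : Fin n → ZMod p) : 0 ≤ Nf A V ξ j t :=
  Finset.sum_nonneg fun x _ => by positivity

lemma Nf_sum (t : Fin n → ZMod p) : ∑ j, Nf A V ξ j t = cnt A (perp p n V) t := by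
  unfold Nf
  rw [cnt_eq_fs]
  exact Finset.sum_fiberwise _ _ _

lemma Nf_rep {j : ZMod p} {w : Fin n → ZMod p} (hw : w ∈ perp p n V) (hwj : pa ξ w = j)
    (t : Fin n → ZMod p) :
    Nf A V ξ j t = cnt A (perp p n (V ⊔ Submodule.span (ZMod p) {ξ})) (t + w) := by
  unfold Nf
  rw [cnt_eq_fs]
  rw [fiber_sum hw hwj (fun x => if t + x ∈ A then (1:ℝ) else 0)]
  exact Finset.sum_congr rfl fun y _ => by rw [add_assoc]

lemma fib_card (hp : p.Prime) (hξ : ξ ∉ V) (j : ZMod p) :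
    ((fs (perp p n V)).filter (fun x => pa ξ x = j)).card
      = Fintype.card (perp p n (V ⊔ Submodule.span (ZMod p) {ξ})) := by
  obtain ⟨w, hw, hwj⟩ := pa_surj hp hξ j
  have h1 := fiber_sum (M := ℕ) hw hwj (fun _ => 1)
  simp only [Finset.sum_const, smul_eq_mul, mul_one] at h1
  rw [← card_fs]
  exact h1

lemma card_perp_mul (hp : p.Prime) (hξ : ξ ∉ V) :
    Fintype.card (perp p n V)
      = p * Fintype.card (perp p n (V ⊔ Submodule.span (ZMod p) {ξ})) := by
  have h1 : (fs (perp p n V)).card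
      = ∑ j : ZMod p, ((fs (perp p n V)).filter (fun x => pa ξ x = j)).card :=
    Finset.card_eq_sum_card_fiberwise (fun x _ => Finset.mem_univ _)
  rw [← card_fs, h1, Finset.sum_congr rfl (fun j _ => fib_card V ξ hp hξ j),
    Finset.sum_const, smul_eq_mul, Finset.card_univ, ZMod.card]

lemma Tt_eq (t : Fin n → ZMod p) :
    Tt A V ξ t = ∑ j : ZMod p, ((Nf A V ξ j t : ℝ) : ℂ) * nu p (inn ξ t + j) := by
  unfold Tt
  rw [sum_subtype_fs (perp p n V)
    (fun x => ind A (t + x) * (starRingEnd ℂ) (chi p n ξ (t + x)))]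
  have hterm : ∀ x, ind A (t + x) * (starRingEnd ℂ) (chi p n ξ (t + x))
      = ind A (t + x) * nu p (inn ξ t + pa ξ x) := by
    intro x
    rw [conj_chi, inn_add, inn_eq_pa ξ x]
  rw [Finset.sum_congr rfl fun x _ => hterm x]
  rw [← Finset.sum_fiberwise (fs (perp p n V)) (fun x => pa ξ x)
    (fun x => ind A (t + x) * nu p (inn ξ t + pa ξ x))]
  refine Finset.sum_congr rfl fun j _ => ?_
  have h1 : ∀ x ∈ (fs (perp p n V)).filter (fun x => pa ξ x = j),
      ind A (t + x) * nu p (inn ξ t + pa ξ x)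
        = (if t + x ∈ A then (1:ℂ) else 0) * nu p (inn ξ t + j) := by
    intro x hx
    rw [(Finset.mem_filter.mp hx).2]
    rfl
  rw [Finset.sum_congr rfl h1, ← Finset.sum_mul]
  congr 1
  unfold Nf
  push_cast
  exact Finset.sum_congr rfl fun x _ => by split <;> simp

lemma abs_Tt_le (hp : p.Prime) (t : Fin n → ZMod p) :
    ‖Tt A V ξ t‖
      ≤ ∑ j : ZMod p, |Nf A V ξ j t - cnt A (perp p n V) t / p| := by
  have h0 : ∑ j : ZMod p, ((cnt A (perp p n V) t / p : ℝ) : ℂ) * nu p (inn ξ t + j) = 0 := by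
    rw [← Finset.mul_sum, nu_sum_shift hp, mul_zero]
  have h1 : Tt A V ξ t = ∑ j : ZMod p,
      ((Nf A V ξ j t - cnt A (perp p n V) t / p : ℝ) : ℂ) * nu p (inn ξ t + j) := by
    rw [Tt_eq, ← sub_zero (∑ j : ZMod p, ((Nf A V ξ j t : ℝ) : ℂ) * nu p (inn ξ t + j)), ← h0,
      ← Finset.sum_sub_distrib]
    exact Finset.sum_congr rfl fun j _ => by push_cast; ring
  rw [h1]
  refine le_trans (norm_sum_le _ _) (le_of_eq (Finset.sum_congr rfl fun j _ => ?_))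
  rw [norm_mul, nu_abs, mul_one, Complex.norm_real, Real.norm_eq_abs]

lemma abs_Tt_le_cnt (t : Fin n → ZMod p) :
    ‖Tt A V ξ t‖ ≤ cnt A (perp p n V) t := by
  unfold Tt cnt
  refine le_trans (norm_sum_le _ _) (le_of_eq (Finset.sum_congr rfl fun w _ => ?_))
  rw [norm_mul, conj_chi, nu_abs, mul_one]
  unfold ind
  split <;> simp

end Increment

end SC

namespace SC

lemma sc_CS {ι : Type*} [Fintype ι] (a b : ι → ℝ) (ha : ∀ i, 0 ≤ a i) (hb : ∀ i, 0 ≤ b i)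
    (hba : ∀ i, b i ≤ a i) :
    (∑ i, b i)^2 / (2 * ∑ i, a i) ≤ ∑ i, (b i)^2 / (2 * a i) := by
  have hz : ∀ i, a i = 0 → b i = 0 := fun i h => le_antisymm (h ▸ hba i) (hb i)
  have hCS : (∑ i, b i)^2 ≤ (∑ i, a i) * ∑ i, (b i)^2 / a i := by
    have h := Finset.sum_mul_sq_le_sq_mul_sq univ (fun i => Real.sqrt (a i))
      (fun i => b i / Real.sqrt (a i))
    have h1 : ∀ i, Real.sqrt (a i) * (b i / Real.sqrt (a i)) = b i := by
      intro i
      rcases eq_or_lt_of_le (ha i) with h0 | h0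
      · rw [hz i h0.symm, ← h0]
        simp
      · rw [mul_comm, div_mul_cancel₀]
        exact ne_of_gt (Real.sqrt_pos.mpr h0)
    have h2 : ∀ i, (Real.sqrt (a i))^2 = a i := fun i => Real.sq_sqrt (ha i)
    have h3 : ∀ i, (b i / Real.sqrt (a i))^2 = (b i)^2 / a i := by
      intro i
      rw [div_pow, h2]
    calc (∑ i, b i)^2 = (∑ i, Real.sqrt (a i) * (b i / Real.sqrt (a i)))^2 := by
          rw [Finset.sum_congr rfl fun i _ => h1 i]
      _ ≤ (∑ i, (Real.sqrt (a i))^2) * ∑ i, (b i / Real.sqrt (a i))^2 := h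
      _ = (∑ i, a i) * ∑ i, (b i)^2 / a i := by
          rw [Finset.sum_congr rfl fun i _ => h2 i, Finset.sum_congr rfl fun i _ => h3 i]
  have hrhs : ∑ i, (b i)^2 / (2 * a i) = (∑ i, (b i)^2 / a i)/2 := by
    rw [Finset.sum_div]
    exact Finset.sum_congr rfl fun i _ => by rw [div_div, mul_comm]
  rw [hrhs]
  rcases eq_or_lt_of_le (Finset.sum_nonneg (fun i (_ : i ∈ univ) => ha i)) with h0 | h0
  · have hb0 : ∀ i ∈ univ, b i = 0 := fun i _ =>
      hz i ((Finset.sum_eq_zero_iff_of_nonneg (fun i _ => ha i)).mp h0.symm i (mem_univ i))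
    rw [Finset.sum_eq_zero hb0]
    have : ∀ i ∈ univ, (b i)^2 / a i = 0 := by
      intro i hi
      rw [hb0 i hi]
      simp
    rw [Finset.sum_eq_zero this]
    simp
  · rw [div_le_div_iff₀ (by positivity) (by norm_num)]
    calc (∑ i, b i)^2 * 2 ≤ ((∑ i, a i) * ∑ i, (b i)^2 / a i) * 2 := by
          have := hCS; nlinarith
      _ = (∑ i, (b i)^2 / a i) * (2 * ∑ i, a i) := by ring

variable {p n : ℕ} [NeZero p]

section Increment2

variable (A : Finset (Fin n → ZMod p)) (V : Submodule (ZMod p) (Fin n → ZMod p))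
  (ξ : Fin n → ZMod p)

lemma key_t (hp : p.Prime) (hξ : ξ ∉ V) (t : Fin n → ZMod p) :
    (‖Tt A V ξ t‖ / (Fintype.card (perp p n V) : ℝ))^2
        / (2 * (cnt A (perp p n V) t / (Fintype.card (perp p n V) : ℝ)))
      ≤ (∑ j : ZMod p, (Fintype.card (perp p n (V ⊔ Submodule.span (ZMod p) {ξ})) : ℝ) *
            ((Nf A V ξ j t / (Fintype.card (perp p n (V ⊔ Submodule.span (ZMod p) {ξ})) : ℝ)) *
              Real.log (Nf A V ξ j t
                / (Fintype.card (perp p n (V ⊔ Submodule.span (ZMod p) {ξ})) : ℝ))))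
          / (Fintype.card (perp p n V) : ℝ)
        - (cnt A (perp p n V) t / (Fintype.card (perp p n V) : ℝ)) *
            Real.log (cnt A (perp p n V) t / (Fintype.card (perp p n V) : ℝ)) := by
  haveI : Nonempty (perp p n V) := ⟨0⟩
  haveI : Nonempty (perp p n (V ⊔ Submodule.span (ZMod p) {ξ})) := ⟨0⟩
  set m : ℝ := (Fintype.card (perp p n V) : ℝ) with hmdef
  set m' : ℝ := (Fintype.card (perp p n (V ⊔ Submodule.span (ZMod p) {ξ})) : ℝ) with hm'def
  have hm'0 : 0 < m' := by rw [hm'def]; exact_mod_cast Fintype.card_pos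
  have hp0 : (0:ℝ) < p := by exact_mod_cast hp.pos
  have hmm' : m = p * m' := by
    rw [hmdef, hm'def]
    exact_mod_cast card_perp_mul V ξ hp hξ
  have hm0 : 0 < m := by rw [hmm']; positivity
  set c : ZMod p → ℝ := fun j => Nf A V ξ j t / m' with hc
  have hkey := sc_key c (fun j => div_nonneg (Nf_nonneg A V ξ j t) hm'0.le)
  rw [ZMod.card] at hkey
  have ha_eq : (∑ j, c j)/(p:ℝ) = cnt A (perp p n V) t / m := by
    rw [hc]
    simp only
    rw [← Finset.sum_div, Nf_sum, div_div, hmm', mul_comm]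
  rw [ha_eq] at hkey
  have habs_j : ∀ j, |c j - cnt A (perp p n V) t / m| = |Nf A V ξ j t
      - cnt A (perp p n V) t / p| / m' := by
    intro j
    rw [hc]
    simp only
    rw [← abs_of_pos hm'0, ← abs_div]
    congr 1
    rw [abs_of_pos hm'0, hmm']
    field_simp
  have hlhs_eq : (∑ j, |c j - cnt A (perp p n V) t / m|)/(p:ℝ)
      = (∑ j : ZMod p, |Nf A V ξ j t - cnt A (perp p n V) t / p|)/m := by
    rw [Finset.sum_congr rfl fun j _ => habs_j j, ← Finset.sum_div, div_div, mul_comm, ← hmm']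
  rw [hlhs_eq] at hkey
  have hrhs_eq : (∑ j, c j * Real.log (c j))/(p:ℝ)
      = (∑ j : ZMod p, m' * (c j * Real.log (c j)))/m := by
    rw [← Finset.mul_sum, hmm']
    field_simp
  rw [hrhs_eq] at hkey
  refine le_trans ?_ hkey
  have hnum : ‖Tt A V ξ t‖ / m
      ≤ (∑ j : ZMod p, |Nf A V ξ j t - cnt A (perp p n V) t / p|)/m := by
    exact div_le_div_of_nonneg_right (abs_Tt_le A V ξ hp t) hm0.le
  have hsq : (‖Tt A V ξ t‖ / m)^2
      ≤ ((∑ j : ZMod p, |Nf A V ξ j t - cnt A (perp p n V) t / p|)/m)^2 := by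
    apply pow_le_pow_left₀ (by positivity) hnum
  rcases eq_or_lt_of_le (div_nonneg (cnt_nonneg A (perp p n V) t) hm0.le) with h0 | h0
  · rw [← h0, mul_zero, div_zero, div_zero]
  · apply div_le_div_of_nonneg_right hsq (by positivity)

end Increment2

end SC

namespace SC

variable {p n : ℕ} [NeZero p]

section Increment3

variable (A : Finset (Fin n → ZMod p)) (V : Submodule (ZMod p) (Fin n → ZMod p))
  (ξ : Fin n → ZMod p)

lemma psi_fiber (hp : p.Prime) (hξ : ξ ∉ V) (t : Fin n → ZMod p) :
    ∑ x ∈ fs (perp p n V),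
        ((cnt A (perp p n (V ⊔ Submodule.span (ZMod p) {ξ})) (t + x)
            / (Fintype.card (perp p n (V ⊔ Submodule.span (ZMod p) {ξ})) : ℝ)) *
          Real.log (cnt A (perp p n (V ⊔ Submodule.span (ZMod p) {ξ})) (t + x)
            / (Fintype.card (perp p n (V ⊔ Submodule.span (ZMod p) {ξ})) : ℝ)))
      = ∑ j : ZMod p, (Fintype.card (perp p n (V ⊔ Submodule.span (ZMod p) {ξ})) : ℝ) *
          ((Nf A V ξ j t / (Fintype.card (perp p n (V ⊔ Submodule.span (ZMod p) {ξ})) : ℝ)) *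
            Real.log (Nf A V ξ j t
              / (Fintype.card (perp p n (V ⊔ Submodule.span (ZMod p) {ξ})) : ℝ))) := by
  set m' : ℝ := (Fintype.card (perp p n (V ⊔ Submodule.span (ZMod p) {ξ})) : ℝ) with hm'def
  rw [← Finset.sum_fiberwise (fs (perp p n V)) (fun x => pa ξ x)]
  refine Finset.sum_congr rfl fun j _ => ?_
  have h1 : ∀ x ∈ (fs (perp p n V)).filter (fun x => pa ξ x = j),
      (cnt A (perp p n (V ⊔ Submodule.span (ZMod p) {ξ})) (t + x) / m') *
        Real.log (cnt A (perp p n (V ⊔ Submodule.span (ZMod p) {ξ})) (t + x) / m')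
      = (Nf A V ξ j t / m') * Real.log (Nf A V ξ j t / m') := by
    intro x hx
    obtain ⟨hx1, hx2⟩ := Finset.mem_filter.mp hx
    rw [← Nf_rep A V ξ (mem_fs.mp hx1) hx2 t]
  rw [Finset.sum_congr rfl h1, Finset.sum_const, nsmul_eq_mul, fib_card V ξ hp hξ j]

lemma increment (hp : p.Prime) (hξ : ξ ∉ V) :
    Psi A V + (∑ t, ‖Tt A V ξ t‖ / (Fintype.card (perp p n V) : ℝ))^2
        / (2 * A.card)
      ≤ Psi A (V ⊔ Submodule.span (ZMod p) {ξ}) := by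
  haveI : Nonempty (perp p n V) := ⟨0⟩
  haveI : Nonempty (perp p n (V ⊔ Submodule.span (ZMod p) {ξ})) := ⟨0⟩
  set W := perp p n V with hWdef
  set W' := perp p n (V ⊔ Submodule.span (ZMod p) {ξ}) with hW'def
  set m : ℝ := (Fintype.card W : ℝ) with hmdef
  set m' : ℝ := (Fintype.card W' : ℝ) with hm'def
  have hm0 : 0 < m := by rw [hmdef]; exact_mod_cast Fintype.card_pos
  have hm'0 : 0 < m' := by rw [hm'def]; exact_mod_cast Fintype.card_pos
  set a : (Fin n → ZMod p) → ℝ := fun t => cnt A W t / m with hadef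
  set b : (Fin n → ZMod p) → ℝ := fun t => ‖Tt A V ξ t‖ / m with hbdef
  -- the potential difference dominates the per-coset sums
  have hkey : ∀ t, (b t)^2 / (2 * a t)
      ≤ (∑ j : ZMod p, m' * ((Nf A V ξ j t / m') * Real.log (Nf A V ξ j t / m')))/m
        - a t * Real.log (a t) := key_t A V ξ hp hξ
  have hpsi' : ∀ t, (∑ j : ZMod p, m' * ((Nf A V ξ j t / m') * Real.log (Nf A V ξ j t / m')))
      = ∑ x ∈ fs W, ((cnt A W' (t + x) / m') * Real.log (cnt A W' (t + x) / m')) :=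
    fun t => (psi_fiber A V ξ hp hξ t).symm
  -- translation invariance
  have hshift : ∑ t, ∑ x ∈ fs W, ((cnt A W' (t + x) / m') * Real.log (cnt A W' (t + x) / m'))
      = m * Psi A (V ⊔ Submodule.span (ZMod p) {ξ}) := by
    rw [Finset.sum_comm]
    have h1 : ∀ x, ∑ t, ((cnt A W' (t + x) / m') * Real.log (cnt A W' (t + x) / m'))
        = Psi A (V ⊔ Submodule.span (ZMod p) {ξ}) :=
      fun x => Fintype.sum_equiv (Equiv.addRight x) _ _ (fun t => rfl)
    rw [Finset.sum_congr rfl fun x _ => h1 x, Finset.sum_const, nsmul_eq_mul, card_fs]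
  have hsum_a : ∑ t, a t = (A.card : ℝ) := by
    rw [hadef]
    simp only
    rw [← Finset.sum_div, sum_cnt, mul_comm, mul_div_assoc, div_self (ne_of_gt hm0), mul_one]
  have hCS : (∑ t, b t)^2 / (2 * A.card) ≤ ∑ t, (b t)^2 / (2 * a t) := by
    rw [← hsum_a]
    refine sc_CS a b (fun t => div_nonneg (cnt_nonneg A W t) hm0.le)
      (fun t => div_nonneg (norm_nonneg _) hm0.le)
      (fun t => div_le_div_of_nonneg_right (abs_Tt_le_cnt A V ξ t) hm0.le)
  have hsum_key : ∑ t, ((b t)^2 / (2 * a t))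
      ≤ Psi A (V ⊔ Submodule.span (ZMod p) {ξ}) - Psi A V := by
    have h2 := Finset.sum_le_sum (fun t (_ : t ∈ univ) => hkey t)
    refine le_trans h2 (le_of_eq ?_)
    rw [Finset.sum_sub_distrib, ← Finset.sum_div]
    rw [Finset.sum_congr rfl fun t _ => hpsi' t, hshift]
    rw [mul_comm, mul_div_assoc, div_self (ne_of_gt hm0), mul_one]
    rfl
  have := le_trans hCS hsum_key
  linarith

end Increment3

end SC

namespace SC

variable {p n : ℕ} [NeZero p]

lemma Psi_nonpos (A : Finset (Fin n → ZMod p)) (V : Submodule (ZMod p) (Fin n → ZMod p)) :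
    Psi A V ≤ 0 := by
  haveI : Nonempty (perp p n V) := ⟨0⟩
  have hm0 : (0:ℝ) < (Fintype.card (perp p n V) : ℝ) := by exact_mod_cast Fintype.card_pos
  refine Finset.sum_nonpos fun t _ => ?_
  have hx0 : 0 ≤ cnt A (perp p n V) t / (Fintype.card (perp p n V) : ℝ) :=
    div_nonneg (cnt_nonneg A _ t) hm0.le
  have hx1 : cnt A (perp p n V) t / (Fintype.card (perp p n V) : ℝ) ≤ 1 :=
    (div_le_one hm0).mpr (cnt_le_card A _ t)
  exact mul_nonpos_iff.mpr (Or.inl ⟨hx0, Real.log_nonpos hx0 hx1⟩)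

lemma cnt_top (A : Finset (Fin n → ZMod p)) (t : Fin n → ZMod p) :
    cnt A (⊤ : Submodule (ZMod p) (Fin n → ZMod p)) t = A.card := by
  rw [cnt_eq_fs]
  have hfs : fs (⊤ : Submodule (ZMod p) (Fin n → ZMod p)) = Finset.univ := by
    ext x; simp [fs]
  rw [hfs]
  rw [Fintype.sum_equiv (Equiv.addLeft t) (fun x => if t + x ∈ A then (1:ℝ) else 0)
    (fun x => if x ∈ A then (1:ℝ) else 0) (fun x => rfl)]
  rw [Finset.sum_ite_mem, Finset.univ_inter, Finset.sum_const, nsmul_eq_mul, mul_one]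

lemma card_top_amb : (Fintype.card (⊤ : Submodule (ZMod p) (Fin n → ZMod p)) : ℝ)
    = (p:ℝ)^n := by
  rw [Fintype.card_congr Submodule.topEquiv.toEquiv]
  rw [Fintype.card_fun, ZMod.card, Fintype.card_fin]
  push_cast
  ring

lemma Psi_bot (A : Finset (Fin n → ZMod p)) {α : ℝ} (hα : (A.card : ℝ) = α * (p:ℝ)^n)
    (hpn : (0:ℝ) < (p:ℝ)^n) :
    Psi A (⊥ : Submodule (ZMod p) (Fin n → ZMod p)) = (p:ℝ)^n * (α * Real.log α) := by
  unfold Psi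
  rw [perp_bot]
  have hct : ∀ t : Fin n → ZMod p,
      cnt A (⊤ : Submodule (ZMod p) (Fin n → ZMod p)) t
        / (Fintype.card (⊤ : Submodule (ZMod p) (Fin n → ZMod p)) : ℝ) = α := by
    intro t
    rw [cnt_top, card_top_amb, hα, mul_div_assoc, div_self (ne_of_gt hpn), mul_one]
  rw [Finset.sum_congr rfl fun t _ => by rw [hct t]]
  rw [Finset.sum_const, nsmul_eq_mul, Finset.card_univ, Fintype.card_fun, ZMod.card,
    Fintype.card_fin]
  push_cast
  ring

/-- the "good" conclusion predicate. -/
def good (A : Finset (Fin n → ZMod p)) (V : Submodule (ZMod p) (Fin n → ZMod p))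
    (α ε : ℝ) : Prop :=
  ∀ ξ ∉ V,
    (∑ t, ‖Tt A V ξ t / (Fintype.card (perp p n V) : ℂ)‖) / (p : ℝ) ^ n ≤ ε * α

lemma iterate (hp : p.Prime) (A : Finset (Fin n → ZMod p)) (α ε : ℝ)
    (hα : (A.card : ℝ) = α * (p:ℝ)^n) (hα0 : 0 < α) (hε0 : 0 < ε) :
    ∀ k : ℕ,
      (∃ V : Submodule (ZMod p) (Fin n → ZMod p), (p:ℝ)^n * (α * Real.log α)
          + (Module.finrank (ZMod p) V : ℝ) * (ε^2 * α / 2 * (p:ℝ)^n) ≤ Psi A V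
          ∧ good A V α ε) ∨
      (∃ V : Submodule (ZMod p) (Fin n → ZMod p), Module.finrank (ZMod p) V = k ∧
          (p:ℝ)^n * (α * Real.log α) + (k:ℝ) * (ε^2 * α / 2 * (p:ℝ)^n) ≤ Psi A V) := by
  haveI := Fact.mk hp
  have hpn : (0:ℝ) < (p:ℝ)^n := by
    have : (0:ℝ) < (p:ℝ) := by exact_mod_cast hp.pos
    positivity
  intro k
  induction k with
  | zero =>
    right
    refine ⟨⊥, ?_, ?_⟩
    · exact finrank_bot (ZMod p) (Fin n → ZMod p)
    · rw [Psi_bot A hα hpn]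
      simp
  | succ k ih =>
    rcases ih with h | ⟨V, hVrank, hVbound⟩
    · exact Or.inl h
    by_cases hgood : good A V α ε
    · exact Or.inl ⟨V, by rw [hVrank]; exact hVbound, hgood⟩
    right
    rw [good] at hgood
    push_neg at hgood
    obtain ⟨ξ, hξ, hbad⟩ := hgood
    refine ⟨V ⊔ Submodule.span (ZMod p) {ξ}, ?_, ?_⟩
    · rw [rank_sup_span hp hξ, hVrank]
    haveI : Nonempty (perp p n V) := ⟨0⟩
    have hm0 : (0:ℝ) < (Fintype.card (perp p n V) : ℝ) := by exact_mod_cast Fintype.card_pos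
    have hinc := increment A V ξ hp hξ
    -- quantify the increment
    have habs : ∀ t, ‖Tt A V ξ t / (Fintype.card (perp p n V) : ℂ)‖
        = ‖Tt A V ξ t‖ / (Fintype.card (perp p n V) : ℝ) := by
      intro t
      rw [norm_div, Complex.norm_natCast]
    have hsum_lt : ε * α * (p:ℝ)^n
        < ∑ t, ‖Tt A V ξ t‖ / (Fintype.card (perp p n V) : ℝ) := by
      rw [lt_div_iff₀ hpn] at hbad
      calc ε * α * (p:ℝ)^n
          < ∑ t, ‖Tt A V ξ t / (Fintype.card (perp p n V) : ℂ)‖ := hbad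
        _ = ∑ t, ‖Tt A V ξ t‖ / (Fintype.card (perp p n V) : ℝ) :=
            Finset.sum_congr rfl fun t _ => habs t
    have hsq : (ε * α * (p:ℝ)^n)^2
        ≤ (∑ t, ‖Tt A V ξ t‖ / (Fintype.card (perp p n V) : ℝ))^2 := by
      apply pow_le_pow_left₀ (by positivity) hsum_lt.le
    have hAcard : (A.card : ℝ) = α * (p:ℝ)^n := hα
    have hquant : ε^2 * α / 2 * (p:ℝ)^n
        ≤ (∑ t, ‖Tt A V ξ t‖ / (Fintype.card (perp p n V) : ℝ))^2
            / (2 * A.card) := by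
      rw [hAcard]
      have h2 : (0:ℝ) < 2 * (α * (p:ℝ)^n) := by positivity
      rw [le_div_iff₀ h2]
      calc ε^2 * α / 2 * (p:ℝ)^n * (2 * (α * (p:ℝ)^n)) = (ε * α * (p:ℝ)^n)^2 := by ring
        _ ≤ _ := hsq
    push_cast
    calc (p:ℝ)^n * (α * Real.log α) + ((k:ℝ)+1) * (ε^2 * α / 2 * (p:ℝ)^n)
        = ((p:ℝ)^n * (α * Real.log α) + (k:ℝ) * (ε^2 * α / 2 * (p:ℝ)^n))
          + ε^2 * α / 2 * (p:ℝ)^n := by push_cast; ring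
      _ ≤ Psi A V + (∑ t, ‖Tt A V ξ t‖ / (Fintype.card (perp p n V) : ℝ))^2
            / (2 * A.card) := by
          have := hVbound
          linarith [hquant]
      _ ≤ Psi A (V ⊔ Submodule.span (ZMod p) {ξ}) := hinc

end SC

-- MORE

/-- Strengthened Chang's lemma: the average over cosets of `perp V` of the fibrewise
Fourier averages is small outside `V`.  (The average over cosets is written as
an average over all shifts `t`, which is the same since all cosets of `perp V`
have equal size.) -/
theorem strengthened_chang (p n : ℕ) (hp : p.Prime) [NeZero p]
    (A : Finset (Fin n → ZMod p)) (α ε : ℝ)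
    (hα : (A.card : ℝ) = α * (p : ℝ) ^ n) (hα0 : 0 < α) (hα1 : α ≤ 1)
    (hε0 : 0 < ε) (hε1 : ε < 1) :
    ∃ V : Submodule (ZMod p) (Fin n → ZMod p),
      (Module.finrank (ZMod p) V : ℝ) ≤ 2 / ε ^ 2 * Real.log (1 / α) ∧
      ∀ ξ ∉ V,
        (∑ t, ‖(∑ w : perp p n V,
                ind A (t + (w : Fin n → ZMod p)) *
                  (starRingEnd ℂ) (chi p n ξ (t + (w : Fin n → ZMod p))))
              / (Fintype.card (perp p n V) : ℂ)‖) / (p : ℝ) ^ n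
          ≤ ε * α := by
  haveI := Fact.mk hp
  have hpn : (0:ℝ) < (p:ℝ)^n := by
    have : (0:ℝ) < (p:ℝ) := by exact_mod_cast hp.pos
    positivity
  have hloginv : Real.log (1/α) = - Real.log α := by rw [one_div, Real.log_inv]
  have hc : (0:ℝ) < ε^2*α/2*(p:ℝ)^n := by positivity
  have heq : (p:ℝ)^n * (α * Real.log (1/α)) / (ε^2*α/2*(p:ℝ)^n)
      = 2/ε^2 * Real.log (1/α) := by
    field_simp
  set k₀ : ℕ := Nat.floor (2/ε^2 * Real.log (1/α)) + 1 with hk₀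
  rcases SC.iterate hp A α ε hα hα0 hε0 k₀ with ⟨V, hbound, hgood⟩ | ⟨V, hrank, hbound⟩
  · refine ⟨V, ?_, ?_⟩
    · have h0 := SC.Psi_nonpos A V
      have hrankb : (Module.finrank (ZMod p) V : ℝ) * (ε^2*α/2*(p:ℝ)^n)
          ≤ (p:ℝ)^n * (α * Real.log (1/α)) := by
        rw [hloginv]
        linarith
      rw [← le_div_iff₀ hc] at hrankb
      rw [heq] at hrankb
      exact hrankb
    · intro ξ hξ
      exact hgood ξ hξ
  · exfalso
    have h0 := SC.Psi_nonpos A V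
    have hkb : (k₀:ℝ) * (ε^2*α/2*(p:ℝ)^n) ≤ (p:ℝ)^n * (α * Real.log (1/α)) := by
      rw [hloginv]
      linarith
    rw [← le_div_iff₀ hc, heq] at hkb
    have hlt := Nat.lt_floor_add_one (2/ε^2 * Real.log (1/α))
    have : (k₀:ℝ) = (Nat.floor (2/ε^2 * Real.log (1/α)) : ℝ) + 1 := by
      rw [hk₀]
      push_cast
      ring
    rw [this] at hkb
    linarith
end

section
/- Let A ⊆ 𝔽_p^n have density α ∈ (0,1] and let ε ∈ (0,1). Then there exists a subspace V ≤ 𝔽_p^n with dim(V) ≤ (2/ε²)·log(1/α) such that Spec_ε(A) ⊆ V, where Spec_ε(A) = {ξ : |1_A^(ξ)| > εα}. -/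
open scoped Classical BigOperators
open Finset

theorem gibbs {ι : Type*} [Fintype ι] (q r : ι → ℝ) (hq : ∀ i, 0 ≤ q i) (hq1 : ∑ i, q i = 1)
    (hr : ∀ i, 0 < q i → 0 < r i) (hr0 : ∀ i, 0 ≤ r i) (hr1 : ∑ i, r i ≤ 1) :
    ∑ i, q i * Real.log (r i) ≤ ∑ i, q i * Real.log (q i) := by
  have key : ∀ i, q i * Real.log (r i) - q i * Real.log (q i) ≤ r i - q i := by
    intro i
    rcases eq_or_lt_of_le (hq i) with h | h
    · simp [← h, hr0 i]
    · have hri := hr i h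
      have hlog : Real.log (r i) - Real.log (q i) = Real.log (r i / q i) :=
        (Real.log_div (ne_of_gt hri) (ne_of_gt h)).symm
      rw [← mul_sub, hlog]
      calc q i * Real.log (r i / q i) ≤ q i * (r i / q i - 1) :=
            mul_le_mul_of_nonneg_left (Real.log_le_sub_one_of_pos (div_pos hri h)) (hq i)
        _ = r i - q i := by field_simp
  have h2 : ∑ i, (q i * Real.log (r i) - q i * Real.log (q i)) ≤ ∑ i, (r i - q i) :=
    Finset.sum_le_sum (fun i _ => key i)
  rw [Finset.sum_sub_distrib, Finset.sum_sub_distrib, hq1] at h2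
  linarith

theorem exp_le_cosh_add (l c : ℝ) (hc : |c| ≤ 1) :
    Real.exp (l * c) ≤ Real.cosh l + c * Real.sinh l := by
  have h1 : (0:ℝ) ≤ (1 - c)/2 := by rw [abs_le] at hc; linarith [hc.2]
  have h2 : (0:ℝ) ≤ (1 + c)/2 := by rw [abs_le] at hc; linarith [hc.1]
  have h3 : (1 - c)/2 + (1 + c)/2 = 1 := by ring
  have := convexOn_exp.2 (Set.mem_univ (-l)) (Set.mem_univ l) h1 h2 h3
  simp only [smul_eq_mul] at this
  calc Real.exp (l * c) = Real.exp ((1-c)/2 * (-l) + (1+c)/2 * l) := by ring_nf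
    _ ≤ (1-c)/2 * Real.exp (-l) + (1+c)/2 * Real.exp l := this
    _ = Real.cosh l + c * Real.sinh l := by rw [Real.cosh_eq, Real.sinh_eq]; ring

theorem sum_e_zero (p : ℕ) [NeZero p] (hp : 2 ≤ p) :
    ∑ t : ZMod p, Complex.exp (-(2 * Real.pi * Complex.I) * ((t.val : ℂ)) / p) = 0 := by
  set ω : ℂ := Complex.exp (-(2 * Real.pi * Complex.I) / p) with hω
  have hpne : (p:ℂ) ≠ 0 := Nat.cast_ne_zero.mpr (by omega)
  have h2 : (2:ℂ) * Real.pi * Complex.I ≠ 0 := by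
    simp [Complex.ofReal_ne_zero.mpr Real.pi_ne_zero, Complex.I_ne_zero]
  have hterm : ∀ t : ZMod p, Complex.exp (-(2 * Real.pi * Complex.I) * ((t.val : ℂ)) / p) = ω ^ t.val := by
    intro t
    rw [hω, ← Complex.exp_nat_mul]
    ring_nf
  rw [Finset.sum_congr rfl (fun t _ => hterm t)]
  have hre : ∑ t : ZMod p, ω ^ t.val = ∑ j ∈ Finset.range p, ω ^ j := by
    apply Finset.sum_nbij (fun t => t.val)
    · intro t _; exact Finset.mem_range.mpr (ZMod.val_lt t)
    · intro t _ t' _ h; exact ZMod.val_injective p h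
    · intro j hj
      exact ⟨(j : ZMod p), Finset.mem_coe.mpr (Finset.mem_univ _),
        ZMod.val_natCast_of_lt (Finset.mem_range.mp hj)⟩
    · intro t _; rfl
  rw [hre]
  have hω1 : ω ≠ 1 := by
    intro h
    rw [hω, Complex.exp_eq_one_iff] at h
    obtain ⟨k, hk⟩ := h
    field_simp at hk
    -- hk should be : -(2 * π * I) = k * (2 * π * I) * p  (or some arrangement)
    have h3 : ((k * p : ℤ) : ℂ) * (2 * Real.pi * Complex.I) = ((-1 : ℤ) : ℂ) * (2 * Real.pi * Complex.I) := by
      push_cast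
      linear_combination -(2 * Real.pi * Complex.I) * hk
    have h4 : (k * p : ℤ) = -1 := by exact_mod_cast mul_right_cancel₀ h2 h3
    have h5 : (p:ℤ) ∣ 1 := ⟨-k, by linarith⟩
    have := Int.le_of_dvd one_pos h5
    omega
  have hωp : ω ^ p = 1 := by
    rw [hω, ← Complex.exp_nat_mul]
    rw [show (p:ℂ) * (-(2 * Real.pi * Complex.I) / p) = ((-1 : ℤ) : ℂ) * (2 * Real.pi * Complex.I) by
      push_cast; field_simp]
    exact Complex.exp_int_mul_two_pi_mul_I (-1)
  rw [geom_sum_eq hω1, hωp]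
  simp

theorem entropy_bound (p : ℕ) [NeZero p] (hp : 2 ≤ p) (q : ZMod p → ℝ)
    (hq : ∀ t, 0 ≤ q t) (hq1 : ∑ t, q t = 1) (ε : ℝ) (hε0 : 0 < ε) (hε1 : ε ≤ 1)
    (hz : ε < ‖(∑ t, (q t : ℂ) * Complex.exp (-(2 * Real.pi * Complex.I) * ((t.val : ℂ)) / p))‖) :
    -∑ t, q t * Real.log (q t) ≤ Real.log p - ε^2/2 := by
  set e : ZMod p → ℂ := fun t => Complex.exp (-(2 * Real.pi * Complex.I) * ((t.val : ℂ)) / p) with he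
  set z : ℂ := ∑ t, (q t : ℂ) * e t with hzdef
  have hzpos : 0 < ‖z‖ := lt_trans hε0 hz
  set w : ℂ := (starRingEnd ℂ) z / ((‖z‖ : ℝ) : ℂ) with hw
  set c : ZMod p → ℝ := fun t => (w * e t).re with hc
  have habse : ∀ t, ‖e t‖ = 1 := by
    intro t
    rw [he]
    have : -(2 * (Real.pi:ℂ) * Complex.I) * ((t.val : ℕ) : ℂ) / p
        = ((-(2 * Real.pi * (t.val:ℝ) / p) : ℝ) : ℂ) * Complex.I := by push_cast; ring
    simp only [this, Complex.norm_exp_ofReal_mul_I]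
  have habsw : ‖w‖ = 1 := by
    rw [hw, norm_div, Complex.norm_conj, Complex.norm_real, Real.norm_eq_abs, abs_of_pos hzpos,
      div_self (ne_of_gt hzpos)]
  have habs : ∀ t, |c t| ≤ 1 := by
    intro t
    calc |c t| ≤ ‖w * e t‖ := Complex.abs_re_le_norm _
      _ = 1 := by rw [norm_mul, habsw, habse, one_mul]
  have hsumc : ∑ t, c t = 0 := by
    have : ∑ t, c t = (w * ∑ t, e t).re := by
      rw [Finset.mul_sum, Complex.re_sum]
    rw [this, sum_e_zero p hp, mul_zero, Complex.zero_re]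
  have hqc : ∑ t, q t * c t = ‖z‖ := by
    have h1 : ∑ t, q t * c t = (w * z).re := by
      rw [hzdef, Finset.mul_sum, Complex.re_sum]
      congr 1; ext t
      rw [show w * ((q t : ℂ) * e t) = (q t : ℂ) * (w * e t) by ring, Complex.re_ofReal_mul]
    have hane : ((‖z‖ : ℝ) : ℂ) ≠ 0 := by exact_mod_cast ne_of_gt hzpos
    have h2 : w * z = ((‖z‖ : ℝ) : ℂ) := by
      rw [hw, div_mul_eq_mul_div, mul_comm ((starRingEnd ℂ) z) z, Complex.mul_conj,
        ← Complex.sq_norm]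
      push_cast
      field_simp
    rw [h1, h2, Complex.ofReal_re]
  -- Donsker-Varadhan with r t = exp(ε c t)/Z
  set Z : ℝ := ∑ t, Real.exp (ε * c t) with hZ
  have hZpos : 0 < Z := Finset.sum_pos (fun t _ => Real.exp_pos _) Finset.univ_nonempty
  have hgibbs := gibbs q (fun t => Real.exp (ε * c t) / Z) hq hq1
    (fun t _ => div_pos (Real.exp_pos _) hZpos) (fun t => le_of_lt (div_pos (Real.exp_pos _) hZpos))
    (le_of_eq (by rw [← Finset.sum_div, ← hZ, div_self (ne_of_gt hZpos)]))
  have hlogr : ∀ t, Real.log (Real.exp (ε * c t) / Z) = ε * c t - Real.log Z := by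
    intro t
    rw [Real.log_div (Real.exp_ne_zero _) (ne_of_gt hZpos), Real.log_exp]
  have hlhs : ∑ t, q t * Real.log (Real.exp (ε * c t) / Z)
      = ε * (∑ t, q t * c t) - Real.log Z := by
    calc ∑ t, q t * Real.log (Real.exp (ε * c t) / Z)
        = ∑ t, (ε * (q t * c t) - q t * Real.log Z) := by
          refine Finset.sum_congr rfl (fun t _ => ?_)
          rw [hlogr t]; ring
      _ = ε * (∑ t, q t * c t) - (∑ t, q t) * Real.log Z := by
          rw [Finset.sum_sub_distrib, ← Finset.mul_sum, ← Finset.sum_mul]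
      _ = ε * (∑ t, q t * c t) - Real.log Z := by rw [hq1, one_mul]
  have hZle : Z ≤ p * Real.cosh ε := by
    calc Z ≤ ∑ t : ZMod p, (Real.cosh ε + c t * Real.sinh ε) :=
          Finset.sum_le_sum (fun t _ => exp_le_cosh_add ε (c t) (habs t))
      _ = p * Real.cosh ε + (∑ t, c t) * Real.sinh ε := by
          rw [Finset.sum_add_distrib, Finset.sum_const, Finset.card_univ, ZMod.card,
            ← Finset.sum_mul, nsmul_eq_mul]
      _ = p * Real.cosh ε := by rw [hsumc, zero_mul, add_zero]
  have hlogZ : Real.log Z ≤ Real.log p + ε^2/2 := by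
    have hppos : (0:ℝ) < p := by positivity
    calc Real.log Z ≤ Real.log (p * Real.cosh ε) := Real.log_le_log hZpos hZle
      _ = Real.log p + Real.log (Real.cosh ε) :=
          Real.log_mul (ne_of_gt hppos) (ne_of_gt (Real.cosh_pos _))
      _ ≤ Real.log p + ε^2/2 := by
          have h1 : Real.log (Real.cosh ε) ≤ Real.log (Real.exp (ε^2/2)) :=
            Real.log_le_log (Real.cosh_pos _) (Real.cosh_le_exp_half_sq ε)
          rw [Real.log_exp] at h1
          linarith
  rw [hlhs] at hgibbs
  have hee : ε * ε ≤ ε * (∑ t, q t * c t) := by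
    rw [hqc]
    exact mul_le_mul_of_nonneg_left (le_of_lt hz) (le_of_lt hε0)
  nlinarith [hgibbs, hlogZ, hee]

section Core
variable (p n : ℕ) [NeZero p] [Fact (Nat.Prime p)]

/-- the linear map given by the rows in `s` -/
noncomputable def rowMap (s : Finset (Fin n → ZMod p)) :
    (Fin n → ZMod p) →ₗ[ZMod p] (↥s → ZMod p) where
  toFun := fun x i => ∑ j, (i : Fin n → ZMod p) j * x j
  map_add' := by
    intro x y; funext i
    simp [mul_add, Finset.sum_add_distrib]
  map_smul' := by
    intro c x; funext i
    simp only [Pi.smul_apply, smul_eq_mul, RingHom.id_apply, Finset.mul_sum]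
    exact Finset.sum_congr rfl (fun j _ => by ring)

theorem rowMap_surjective (s : Finset (Fin n → ZMod p))
    (hli : LinearIndependent (ZMod p) (fun i : ↥s => (i : Fin n → ZMod p))) :
    Function.Surjective (rowMap p n s) := by
  set L := rowMap p n s
  rw [← LinearMap.range_eq_top]
  by_contra hne
  have hlt : LinearMap.range L < ⊤ := lt_top_iff_ne_top.mpr hne
  obtain ⟨f, hf0, hfmap⟩ := Submodule.exists_dual_map_eq_bot_of_lt_top hlt inferInstance
  set y : ↥s → ZMod p := fun i => f (fun j => if i = j then 1 else 0) with hy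
  have hker : ∀ x, f (L x) = 0 := by
    intro x
    have h1 : f (L x) ∈ (LinearMap.range L).map f :=
      Submodule.mem_map_of_mem (LinearMap.mem_range_self L x)
    rw [hfmap] at h1
    exact (Submodule.mem_bot _).mp h1
  have hexp : ∀ x, ∑ i : ↥s, (L x i) * y i = 0 := by
    intro x
    have h2 := LinearMap.pi_apply_eq_sum_univ f (L x)
    rw [hker x] at h2
    calc ∑ i : ↥s, (L x i) * y i
        = ∑ i : ↥s, L x i • f fun j => if i = j then 1 else 0 :=
          Finset.sum_congr rfl (fun i _ => by rw [smul_eq_mul])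
      _ = 0 := h2.symm
  have hvec : ∑ i : ↥s, y i • (i : Fin n → ZMod p) = 0 := by
    funext j
    have := hexp (Pi.single j 1)
    simp only [Finset.sum_apply, Pi.smul_apply, smul_eq_mul, Pi.zero_apply]
    rw [← this]
    refine Finset.sum_congr rfl (fun i _ => ?_)
    have hLx : L (Pi.single j 1) i = (i : Fin n → ZMod p) j := by
      show ∑ j', (i : Fin n → ZMod p) j' * (Pi.single j 1 : Fin n → ZMod p) j' = _
      rw [Finset.sum_eq_single j]
      · simp
      · intro b _ hb; simp [Pi.single_apply, hb]
      · intro h; exact absurd (Finset.mem_univ j) h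
    rw [hLx]; ring
  have hy0 : ∀ i, y i = 0 := Fintype.linearIndependent_iff.mp hli y hvec
  apply hf0
  apply LinearMap.ext
  intro g
  rw [LinearMap.pi_apply_eq_sum_univ f g]
  simp only [LinearMap.zero_apply]
  refine Finset.sum_eq_zero (fun i _ => ?_)
  have : f (fun j => if i = j then 1 else 0) = y i := rfl
  rw [show (fun j => if i = j then 1 else 0) = (fun j => if i = j then (1:ZMod p) else 0) from rfl]
  rw [this, hy0 i, smul_zero]

theorem rowMap_rank (s : Finset (Fin n → ZMod p))
    (hli : LinearIndependent (ZMod p) (fun i : ↥s => (i : Fin n → ZMod p))) :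
    s.card + Module.finrank (ZMod p) (LinearMap.ker (rowMap p n s)) = n := by
  have h1 := LinearMap.finrank_range_add_finrank_ker (rowMap p n s)
  rw [LinearMap.range_eq_top.mpr (rowMap_surjective p n s hli), finrank_top] at h1
  rw [Module.finrank_pi, Module.finrank_pi, Fintype.card_coe, Fintype.card_fin] at h1
  exact h1

theorem fiber_card_le (s : Finset (Fin n → ZMod p)) (A : Finset (Fin n → ZMod p))
    (y : ↥s → ZMod p) :
    (A.filter (fun x => rowMap p n s x = y)).card
      ≤ p ^ (Module.finrank (ZMod p) (LinearMap.ker (rowMap p n s))) := by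
  set L := rowMap p n s
  rcases (A.filter (fun x => L x = y)).eq_empty_or_nonempty with h | h
  · rw [h, Finset.card_empty]; exact Nat.zero_le _
  obtain ⟨x₀, hx₀⟩ := h
  have hLx₀ : L x₀ = y := (Finset.mem_filter.mp hx₀).2
  have hcard : (A.filter (fun x => L x = y)).card
      ≤ (Finset.univ.filter (fun x => L x = 0)).card := by
    apply Finset.card_le_card_of_injOn (fun x => x - x₀)
    · intro x hx
      rw [Finset.mem_coe, Finset.mem_filter]
      refine ⟨Finset.mem_univ _, ?_⟩
      rw [map_sub, (Finset.mem_filter.mp hx).2, hLx₀, sub_self]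
    · intro x _ x' _ h
      exact sub_left_injective h
  refine hcard.trans (le_of_eq ?_)
  have h2 : (Finset.univ.filter (fun x => L x = 0))
      = (Finset.univ.filter (fun x => x ∈ LinearMap.ker L)) := by
    apply Finset.filter_congr
    intro x _
    simp [LinearMap.mem_ker]
  rw [h2, ← Fintype.card_subtype]
  have h3 : Fintype.card {x // x ∈ LinearMap.ker L}
      = Fintype.card (ZMod p) ^ Module.finrank (ZMod p) (LinearMap.ker L) :=
    Module.card_eq_pow_finrank
  rw [h3, ZMod.card]

theorem chang_core (A : Finset (Fin n → ZMod p)) (α ε : ℝ)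
    (hα : (A.card : ℝ) = α * (p : ℝ) ^ n) (hα0 : 0 < α)
    (hε0 : 0 < ε) (hε1 : ε ≤ 1)
    (s : Finset (Fin n → ZMod p))
    (hli : LinearIndependent (ZMod p) (fun i : ↥s => (i : Fin n → ZMod p)))
    (hspec : ∀ ξ ∈ s, ε * α < ‖ft p n (ind A) ξ‖) :
    (s.card : ℝ) ≤ 2 / ε ^ 2 * Real.log (1 / α) := by
  have hp2 : 2 ≤ p := (Fact.out (p := p.Prime)).two_le
  set L := rowMap p n s with hL
  set d := Module.finrank (ZMod p) (LinearMap.ker L) with hd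
  have hkd : s.card + d = n := rowMap_rank p n s hli
  have hppos : (0:ℝ) < p := by positivity
  have hpn : (0:ℝ) < (p:ℝ) ^ n := by positivity
  have ha : (0:ℝ) < A.card := by rw [hα]; positivity
  have hane : (A.card : ℝ) ≠ 0 := ne_of_gt ha
  set a : ℝ := (A.card : ℝ) with haa
  set Q : (↥s → ZMod p) → ℝ := fun y => ((A.filter fun x => L x = y).card : ℝ) / a with hQ
  set qi : ↥s → ZMod p → ℝ := fun i t => ((A.filter fun x => L x i = t).card : ℝ) / a with hqi
  have hQ0 : ∀ y, 0 ≤ Q y := fun y => by positivity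
  have hqi0 : ∀ i t, 0 ≤ qi i t := fun i t => by positivity
  have hQsum : ∑ y, Q y = 1 := by
    rw [hQ, ← Finset.sum_div, ← Nat.cast_sum,
      ← Finset.card_eq_sum_card_fiberwise (fun x _ => Finset.mem_univ (L x)), ← haa,
      div_self hane]
  have hqisum : ∀ i, ∑ t, qi i t = 1 := by
    intro i
    rw [hqi, ← Finset.sum_div, ← Nat.cast_sum,
      ← Finset.card_eq_sum_card_fiberwise (fun x _ => Finset.mem_univ (L x i)), ← haa,
      div_self hane]
  have hmarg : ∀ (i : ↥s) (t : ZMod p),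
      ∑ y ∈ Finset.univ.filter (fun y => y i = t), Q y = qi i t := by
    intro i t
    have hmaps : ∀ x ∈ A.filter (fun x => L x i = t),
        L x ∈ Finset.univ.filter (fun y => y i = t) := by
      intro x hx
      exact Finset.mem_filter.mpr ⟨Finset.mem_univ _, (Finset.mem_filter.mp hx).2⟩
    have hc := Finset.card_eq_sum_card_fiberwise hmaps
    have hinner : ∀ y ∈ Finset.univ.filter (fun y => y i = t),
        (A.filter fun x => L x i = t).filter (fun x => L x = y) = A.filter fun x => L x = y := by
      intro y hy
      have hyt : y i = t := (Finset.mem_filter.mp hy).2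
      rw [Finset.filter_filter]
      apply Finset.filter_congr
      intro x _
      constructor
      · rintro ⟨-, h⟩; exact h
      · intro h; exact ⟨by rw [h, hyt], h⟩
    have hc' : (A.filter fun x => L x i = t).card
        = ∑ y ∈ Finset.univ.filter (fun y => y i = t), (A.filter fun x => L x = y).card := by
      rw [hc]
      exact Finset.sum_congr rfl (fun y hy => by rw [hinner y hy])
    have hdiv : ∑ y ∈ Finset.univ.filter (fun y => y i = t), Q y
        = (∑ y ∈ Finset.univ.filter (fun y => y i = t),
            ((A.filter fun x => L x = y).card : ℝ)) / a := by
      rw [Finset.sum_div]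
    rw [hdiv]
    congr 1
    rw [hc']
    push_cast
    rfl
  -- Step 1 : log a ≤ H(Q) + d log p
  have hstep1 : Real.log a ≤ (-∑ y, Q y * Real.log (Q y)) + d * Real.log p := by
    have hpt : ∀ y, Q y * Real.log a
        = Q y * Real.log ((A.filter fun x => L x = y).card : ℝ) - Q y * Real.log (Q y) := by
      intro y
      by_cases hc : (A.filter fun x => L x = y).card = 0
      · have hQy : Q y = 0 := by simp [hQ, hc]
        rw [hQy]; simp
      · have hcp : (0:ℝ) < ((A.filter fun x => L x = y).card : ℝ) := by
          exact_mod_cast Nat.pos_of_ne_zero hc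
        have hQy : Real.log (Q y) = Real.log ((A.filter fun x => L x = y).card : ℝ)
            - Real.log a := by
          show Real.log (_ / a) = _
          rw [Real.log_div (ne_of_gt hcp) hane]
        rw [hQy]; ring
    have h1 : Real.log a = (∑ y, Q y * Real.log ((A.filter fun x => L x = y).card : ℝ))
        - ∑ y, Q y * Real.log (Q y) := by
      rw [← Finset.sum_sub_distrib]
      calc Real.log a = ∑ y, Q y * Real.log a := by rw [← Finset.sum_mul, hQsum, one_mul]
        _ = _ := Finset.sum_congr rfl (fun y _ => hpt y)
    have hlogp : (0:ℝ) ≤ Real.log p := Real.log_nonneg (by exact_mod_cast Nat.one_le_of_lt hp2)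
    have h2 : ∀ y, Q y * Real.log ((A.filter fun x => L x = y).card : ℝ)
        ≤ Q y * (d * Real.log p) := by
      intro y
      apply mul_le_mul_of_nonneg_left _ (hQ0 y)
      by_cases hc : (A.filter fun x => L x = y).card = 0
      · rw [hc, Nat.cast_zero, Real.log_zero]
        positivity
      · calc Real.log ((A.filter fun x => L x = y).card : ℝ)
            ≤ Real.log ((p:ℝ)^d) := by
              apply Real.log_le_log (by exact_mod_cast Nat.pos_of_ne_zero hc)
              exact_mod_cast fiber_card_le p n s A y
          _ = d * Real.log p := by rw [Real.log_pow]
    have h3 : ∑ y, Q y * Real.log ((A.filter fun x => L x = y).card : ℝ) ≤ d * Real.log p := by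
      calc ∑ y, Q y * Real.log ((A.filter fun x => L x = y).card : ℝ)
          ≤ ∑ y, Q y * (d * Real.log p) := Finset.sum_le_sum (fun y _ => h2 y)
        _ = (∑ y, Q y) * (d * Real.log p) := by rw [Finset.sum_mul]
        _ = d * Real.log p := by rw [hQsum, one_mul]
    linarith
  -- Step 2 : subadditivity
  have hstep2 : (-∑ y, Q y * Real.log (Q y))
      ≤ ∑ i : ↥s, (-∑ t, qi i t * Real.log (qi i t)) := by
    set r : (↥s → ZMod p) → ℝ := fun y => ∏ i, qi i (y i) with hr
    have hr0 : ∀ y, 0 ≤ r y := fun y => Finset.prod_nonneg (fun i _ => hqi0 i (y i))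
    have hQle : ∀ y (i : ↥s), Q y ≤ qi i (y i) := by
      intro y i
      rw [← hmarg i (y i)]
      refine Finset.single_le_sum (fun y' _ => hQ0 y') ?_
      exact Finset.mem_filter.mpr ⟨Finset.mem_univ _, rfl⟩
    have hrpos : ∀ y, 0 < Q y → 0 < r y :=
      fun y hy => Finset.prod_pos (fun i _ => lt_of_lt_of_le hy (hQle y i))
    have hrsum : ∑ y, r y = 1 := by
      have h1 : ∏ i : ↥s, ∑ t, qi i t = ∑ y : (↥s → ZMod p), r y := by
        rw [Finset.prod_univ_sum, Fintype.piFinset_univ]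
      rw [← h1, Finset.prod_congr rfl (fun i _ => hqisum i), Finset.prod_const_one]
    have hgb := gibbs Q r hQ0 hQsum hrpos hr0 (le_of_eq hrsum)
    have hlogr : ∑ y, Q y * Real.log (r y)
        = ∑ i : ↥s, ∑ t, qi i t * Real.log (qi i t) := by
      have h1 : ∀ y, Q y * Real.log (r y) = ∑ i : ↥s, Q y * Real.log (qi i (y i)) := by
        intro y
        by_cases hy : Q y = 0
        · simp [hy]
        · have hQpos : 0 < Q y := lt_of_le_of_ne (hQ0 y) (Ne.symm hy)
          have hlp : Real.log (r y) = ∑ i : ↥s, Real.log (qi i (y i)) :=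
            Real.log_prod (fun i _ => ne_of_gt (lt_of_lt_of_le hQpos (hQle y i)))
          rw [hlp, Finset.mul_sum]
      rw [Finset.sum_congr rfl (fun y _ => h1 y), Finset.sum_comm]
      refine Finset.sum_congr rfl (fun i _ => ?_)
      rw [← Finset.sum_fiberwise Finset.univ (fun y => y i)
        (fun y => Q y * Real.log (qi i (y i)))]
      refine Finset.sum_congr rfl (fun t _ => ?_)
      calc ∑ y ∈ Finset.univ.filter (fun y => y i = t), Q y * Real.log (qi i (y i))
          = ∑ y ∈ Finset.univ.filter (fun y => y i = t), Q y * Real.log (qi i t) :=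
            Finset.sum_congr rfl (fun y hy => by rw [(Finset.mem_filter.mp hy).2])
        _ = (∑ y ∈ Finset.univ.filter (fun y => y i = t), Q y) * Real.log (qi i t) :=
            (Finset.sum_mul _ _ _).symm
        _ = qi i t * Real.log (qi i t) := by rw [hmarg i t]
    rw [hlogr] at hgb
    have hneg : ∑ i : ↥s, (-∑ t, qi i t * Real.log (qi i t))
        = -∑ i : ↥s, ∑ t, qi i t * Real.log (qi i t) := by
      rw [← Finset.sum_neg_distrib]
    linarith
  -- Step 3 : per-coordinate bound
  have hstep3 : ∀ i : ↥s, (-∑ t, qi i t * Real.log (qi i t)) ≤ Real.log p - ε^2/2 := by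
    intro i
    set ξ : Fin n → ZMod p := (i : Fin n → ZMod p) with hξdef
    have hane' : ((A.card : ℝ) : ℂ) ≠ 0 := by rw [← haa]; exact_mod_cast hane
    have hpnne : ((p:ℂ))^n ≠ 0 := by
      apply pow_ne_zero
      exact_mod_cast (by positivity : (0:ℝ) < (p:ℝ)).ne'
    have hconj : ∀ v : ℕ, (starRingEnd ℂ) (Complex.exp (2 * Real.pi * Complex.I * (v:ℂ) / p))
        = Complex.exp (-(2 * Real.pi * Complex.I) * (v:ℂ) / p) := by
      intro v
      rw [← Complex.exp_conj]
      congr 1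
      simp only [map_div₀, map_mul, Complex.conj_I, map_ofNat, Complex.conj_ofReal,
        map_natCast]
      ring
    have hnum : ∑ x, ind A x * (starRingEnd ℂ) (chi p n ξ x)
        = ∑ t : ZMod p, (((A.filter fun x => L x i = t).card : ℕ) : ℂ)
            * Complex.exp (-(2 * Real.pi * Complex.I) * ((t.val : ℂ)) / p) := by
      have h1 : ∀ x, ind A x * (starRingEnd ℂ) (chi p n ξ x)
          = if x ∈ A then (starRingEnd ℂ) (chi p n ξ x) else 0 := by
        intro x
        by_cases h : x ∈ A <;> simp [ind, h]
      rw [Finset.sum_congr rfl (fun x _ => h1 x), Finset.sum_ite_mem, Finset.univ_inter]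
      have h2 : ∀ x, (starRingEnd ℂ) (chi p n ξ x)
          = Complex.exp (-(2 * Real.pi * Complex.I) * (((L x i).val : ℂ)) / p) := by
        intro x
        have hLi : (∑ j, ξ j * x j) = L x i := rfl
        rw [chi, hLi]
        exact hconj (L x i).val
      rw [Finset.sum_congr rfl (fun x _ => h2 x)]
      rw [← Finset.sum_fiberwise A (fun x => L x i)
        (fun x => Complex.exp (-(2 * Real.pi * Complex.I) * (((L x i).val : ℂ)) / p))]
      refine Finset.sum_congr rfl (fun t _ => ?_)
      calc ∑ x ∈ A.filter (fun x => L x i = t),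
            Complex.exp (-(2 * Real.pi * Complex.I) * (((L x i).val : ℂ)) / p)
          = ∑ _x ∈ A.filter (fun x => L x i = t),
            Complex.exp (-(2 * Real.pi * Complex.I) * ((t.val : ℂ)) / p) :=
            Finset.sum_congr rfl (fun x hx => by rw [(Finset.mem_filter.mp hx).2])
        _ = _ := by rw [Finset.sum_const, nsmul_eq_mul]
    have hft : ft p n (ind A) ξ = (α : ℂ)
        * ∑ t : ZMod p, ((qi i t : ℝ) : ℂ)
            * Complex.exp (-(2 * Real.pi * Complex.I) * ((t.val : ℂ)) / p) := by
      rw [ft, hnum, Finset.mul_sum, Finset.sum_div]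
      refine Finset.sum_congr rfl (fun t _ => ?_)
      have hqit : ((qi i t : ℝ) : ℂ)
          = (((A.filter fun x => L x i = t).card : ℕ) : ℂ) / ((A.card : ℝ) : ℂ) := by
        rw [hqi, haa]; push_cast; ring
      rw [hqit]
      have hαc : ((A.card : ℝ) : ℂ) = (α : ℂ) * ((p:ℂ))^n := by
        have := hα
        rw [haa] at this
        exact_mod_cast congrArg (Complex.ofReal) this
      have hα0c : (α : ℂ) ≠ 0 := by exact_mod_cast ne_of_gt hα0
      rw [hαc]
      field_simp
    have habs : ‖ft p n (ind A) ξ‖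
        = α * ‖(∑ t : ZMod p, ((qi i t : ℝ) : ℂ)
            * Complex.exp (-(2 * Real.pi * Complex.I) * ((t.val : ℂ)) / p))‖ := by
      rw [hft, norm_mul, Complex.norm_real, Real.norm_eq_abs, abs_of_pos hα0]
    have hε' : ε < ‖(∑ t : ZMod p, ((qi i t : ℝ) : ℂ)
        * Complex.exp (-(2 * Real.pi * Complex.I) * ((t.val : ℂ)) / p))‖ := by
      have h := hspec ξ i.2
      rw [habs] at h
      have h2 : α * ε < α * ‖(∑ t : ZMod p, ((qi i t : ℝ) : ℂ)
          * Complex.exp (-(2 * Real.pi * Complex.I) * ((t.val : ℂ)) / p))‖ := by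
        linarith [h]
      exact (mul_lt_mul_iff_right₀ hα0).mp h2
    exact entropy_bound p hp2 (qi i) (hqi0 i) (hqisum i) ε hε0 hε1 hε'
  -- assemble
  have hH : (-∑ y, Q y * Real.log (Q y)) ≤ s.card * (Real.log p - ε^2/2) := by
    calc (-∑ y, Q y * Real.log (Q y)) ≤ ∑ i : ↥s, (-∑ t, qi i t * Real.log (qi i t)) := hstep2
      _ ≤ ∑ _i : ↥s, (Real.log p - ε^2/2) := Finset.sum_le_sum (fun i _ => hstep3 i)
      _ = s.card * (Real.log p - ε^2/2) := by
          rw [Finset.sum_const, Finset.card_univ, Fintype.card_coe, nsmul_eq_mul]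
  have hloga : Real.log a = Real.log α + n * Real.log p := by
    rw [hα, Real.log_mul (ne_of_gt hα0) (ne_of_gt hpn), Real.log_pow]
  have hfinal : (s.card : ℝ) * (ε^2/2) ≤ Real.log (1/α) := by
    rw [Real.log_div one_ne_zero (ne_of_gt hα0), Real.log_one, zero_sub]
    have hn : (n : ℝ) = (s.card : ℝ) + d := by exact_mod_cast hkd.symm
    rw [hloga, hn] at hstep1
    linarith [hstep1, hH]
  have hε2 : (0:ℝ) < ε^2 := by positivity
  calc (s.card : ℝ) = 2/ε^2 * ((s.card : ℝ) * (ε^2/2)) := by field_simp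
    _ ≤ 2/ε^2 * Real.log (1/α) := by
        apply mul_le_mul_of_nonneg_left hfinal
        positivity

end Core

/-- Chang's lemma over `𝔽_p^n`: the large spectrum lies in a low-dimensional subspace. -/
theorem chang_lemma (p n : ℕ) (hp : p.Prime) [NeZero p]
    (A : Finset (Fin n → ZMod p)) (α ε : ℝ)
    (hα : (A.card : ℝ) = α * (p : ℝ) ^ n) (hα0 : 0 < α) (hα1 : α ≤ 1)
    (hε0 : 0 < ε) (hε1 : ε < 1) :
    ∃ V : Submodule (ZMod p) (Fin n → ZMod p),
      (Module.finrank (ZMod p) V : ℝ) ≤ 2 / ε ^ 2 * Real.log (1 / α) ∧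
      ∀ ξ : Fin n → ZMod p, ε * α < ‖ft p n (ind A) ξ‖ → ξ ∈ V := by
  haveI : Fact p.Prime := ⟨hp⟩
  classical
  set S : Set (Fin n → ZMod p) := {ξ | ε * α < ‖ft p n (ind A) ξ‖} with hS
  obtain ⟨b, hbS, hspan, hbind⟩ := exists_linearIndependent (ZMod p) S
  have hfin : b.Finite := hbind.finite
  haveI : Fintype b := hfin.fintype
  refine ⟨Submodule.span (ZMod p) S, ?_, fun ξ hξ => Submodule.subset_span hξ⟩
  have hrank : Module.finrank (ZMod p) (Submodule.span (ZMod p) S) = b.toFinset.card := by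
    rw [← hspan]
    exact finrank_span_set_eq_card hbind
  rw [hrank]
  have hli : LinearIndependent (ZMod p) (fun i : ↥(b.toFinset) => (i : Fin n → ZMod p)) := by
    have h := hbind.comp
      (fun i : ↥(b.toFinset) => (⟨(i : Fin n → ZMod p), Set.mem_toFinset.mp i.2⟩ : ↥b))
      (by
        intro i j hij
        apply Subtype.ext
        exact congrArg (fun x : ↥b => (x : Fin n → ZMod p)) hij)
    exact h
  have hspec : ∀ ξ ∈ b.toFinset, ε * α < ‖ft p n (ind A) ξ‖ := by
    intro ξ hξ
    exact hbS (Set.mem_toFinset.mp hξ)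
  exact chang_core p n A α ε hα hα0 hε0 (le_of_lt hε1) b.toFinset hli hspec
end

section
/- Let μ and ν be probability measures on a finite set X with μ absolutely continuous with respect to ν, let ε ∈ (0,1), and let d : X → [-1,1] satisfy 𝔼_{x∼ν} d(x) = 0 and 𝔼_{x∼μ} d(x) ≥ ε. Define ν'(x) = (1+ε·d(x))·ν(x). Then ν' is a probability measure and D(μ‖ν') ≤ D(μ‖ν) − ε²/2, where D denotes Kullback–Leibler divergence. -/
open scoped BigOperators
open Finset

/-- Kullback–Leibler divergence of two measures on a finite set
(with the convention `0 · log 0 = 0`, which holds for `Real.log`). -/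
noncomputable def KL {X : Type*} [Fintype X] (μ ν : X → ℝ) : ℝ :=
  ∑ x, μ x * Real.log (μ x / ν x)

lemma log_ratio_gt (t : ℝ) (h0 : 0 < t) (h1 : t < 1) :
    2 * t < Real.log (1 + t) - Real.log (1 - t) := by
  set f : ℝ → ℝ := fun s => Real.log (1 + s) - Real.log (1 - s) - 2 * s with hf
  have hderiv : ∀ s ∈ Set.Ioo (0:ℝ) 1, HasDerivAt f (1/(1+s) + 1/(1-s) - 2) s := by
    intro s hs
    have h1s : (1:ℝ) + s ≠ 0 := by nlinarith [hs.1]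
    have h2s : (1:ℝ) - s ≠ 0 := by nlinarith [hs.2]
    have d1 : HasDerivAt (fun u : ℝ => Real.log (1 + u)) (1/(1+s)) s := by
      have : HasDerivAt (fun u : ℝ => 1 + u) 1 s := by
        simpa using (hasDerivAt_id s).const_add 1
      simpa using this.log h1s
    have d2 : HasDerivAt (fun u : ℝ => Real.log (1 - u)) (-(1/(1-s))) s := by
      have : HasDerivAt (fun u : ℝ => 1 - u) (-1) s := by
        exact (hasDerivAt_id s).const_sub 1
      have := this.log h2s
      simpa [neg_div] using this
    have d3 : HasDerivAt (fun u : ℝ => 2 * u) 2 s := by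
      simpa using (hasDerivAt_id s).const_mul 2
    exact ((d1.sub d2).sub d3).congr_deriv (by ring)
  have hmono : StrictMonoOn f (Set.Ico (0:ℝ) 1) := by
    apply strictMonoOn_of_deriv_pos (convex_Ico 0 1)
    · apply ContinuousOn.sub (ContinuousOn.sub ?_ ?_) (by fun_prop)
      · exact (continuous_const.add continuous_id).continuousOn.log
          (fun x hx => by obtain ⟨ha, hb⟩ := hx; intro h; simp only [Pi.add_apply, Pi.sub_apply, id_eq] at h; linarith)
      · exact (continuous_const.sub continuous_id).continuousOn.log
          (fun x hx => by obtain ⟨ha, hb⟩ := hx; intro h; simp only [Pi.add_apply, Pi.sub_apply, id_eq] at h; linarith)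
    · intro s hs
      rw [interior_Ico] at hs
      rw [(hderiv s hs).deriv]
      have h1s : (0:ℝ) < 1 + s := by nlinarith [hs.1]
      have h2s : (0:ℝ) < 1 - s := by nlinarith [hs.2]
      rw [div_add_div _ _ (ne_of_gt h1s) (ne_of_gt h2s)]
      have : (0:ℝ) < (1+s)*(1-s) := by positivity
      rw [sub_pos, lt_div_iff₀ this]
      nlinarith [hs.1, hs.2]
  have := hmono (Set.mem_Ico.2 ⟨le_refl 0, by norm_num⟩)
      (Set.mem_Ico.2 ⟨h0.le, h1⟩) h0
  simp only [hf] at this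
  simp only [add_zero, sub_zero, Real.log_one, mul_zero, sub_self] at this
  linarith

lemma entropy_bound_s17 (ε : ℝ) (h0 : 0 < ε) (h1 : ε < 1) :
    ε^2/2 ≤ (1+ε)/2 * Real.log (1+ε) + (1-ε)/2 * Real.log (1-ε) := by
  set g : ℝ → ℝ := fun s => (1+s)/2 * Real.log (1+s) + (1-s)/2 * Real.log (1-s) - s^2/2
    with hg
  have hderiv : ∀ s ∈ Set.Ioo (0:ℝ) 1,
      HasDerivAt g ((Real.log (1+s) - Real.log (1-s))/2 - s) s := by
    intro s hs
    have h1s : (1:ℝ) + s ≠ 0 := by nlinarith [hs.1]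
    have h2s : (1:ℝ) - s ≠ 0 := by nlinarith [hs.2]
    have a1 : HasDerivAt (fun u : ℝ => 1 + u) 1 s := by
      simpa using (hasDerivAt_id s).const_add 1
    have a2 : HasDerivAt (fun u : ℝ => 1 - u) (-1) s := by
      exact (hasDerivAt_id s).const_sub 1
    have d1 : HasDerivAt (fun u : ℝ => (1+u)/2 * Real.log (1+u))
        ((1:ℝ)/2 * Real.log (1+s) + (1+s)/2 * (1/(1+s))) s := by
      exact ((a1.div_const 2).mul (a1.log h1s))
    have d2 : HasDerivAt (fun u : ℝ => (1-u)/2 * Real.log (1-u))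
        ((-1:ℝ)/2 * Real.log (1-s) + (1-s)/2 * (-1/(1-s))) s := by
      exact ((a2.div_const 2).mul (a2.log h2s))
    have d3 : HasDerivAt (fun u : ℝ => u^2/2) s s := by
      simpa using ((hasDerivAt_id s).pow 2).div_const 2
    have := (d1.add d2).sub d3
    refine this.congr_deriv ?_
    have e1 : (1+s)/2 * (1/(1+s)) = 1/2 := by field_simp
    have e2 : (1-s)/2 * (-1/(1-s)) = -1/2 := by field_simp
    rw [e1, e2]
    ring
  have hmono : StrictMonoOn g (Set.Ico (0:ℝ) 1) := by
    apply strictMonoOn_of_deriv_pos (convex_Ico 0 1)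
    · apply ContinuousOn.sub (ContinuousOn.add ?_ ?_) (by fun_prop)
      · exact ((continuous_const.add continuous_id).div_const 2).continuousOn.mul
          ((continuous_const.add continuous_id).continuousOn.log
            (fun x hx => by obtain ⟨ha, hb⟩ := hx; intro h; simp only [Pi.add_apply, Pi.sub_apply, id_eq] at h; linarith))
      · exact ((continuous_const.sub continuous_id).div_const 2).continuousOn.mul
          ((continuous_const.sub continuous_id).continuousOn.log
            (fun x hx => by obtain ⟨ha, hb⟩ := hx; intro h; simp only [Pi.add_apply, Pi.sub_apply, id_eq] at h; linarith))
    · intro s hs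
      rw [interior_Ico] at hs
      rw [(hderiv s hs).deriv]
      have := log_ratio_gt s hs.1 hs.2
      linarith
  have := hmono (Set.mem_Ico.2 ⟨le_refl 0, by norm_num⟩)
      (Set.mem_Ico.2 ⟨h0.le, h1⟩) h0
  simp only [hg] at this
  simp only [add_zero, sub_zero, Real.log_one, mul_zero, zero_pow, add_def] at this
  norm_num at this
  linarith

/-- The multiplicative-update step decreases the KL divergence by `ε²/2`. -/
theorem kl_decrement {X : Type*} [Fintype X]
    (μ ν : X → ℝ)
    (hμ0 : ∀ x, 0 ≤ μ x) (hμ1 : ∑ x, μ x = 1)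
    (hν0 : ∀ x, 0 ≤ ν x) (hν1 : ∑ x, ν x = 1)
    (hac : ∀ x, ν x = 0 → μ x = 0)
    (ε : ℝ) (hε0 : 0 < ε) (hε1 : ε < 1)
    (d : X → ℝ) (hd : ∀ x, -1 ≤ d x ∧ d x ≤ 1)
    (hmeanν : ∑ x, d x * ν x = 0) (hmeanμ : ε ≤ ∑ x, d x * μ x) :
    (∀ x, 0 ≤ (1 + ε * d x) * ν x) ∧
    (∑ x, (1 + ε * d x) * ν x) = 1 ∧
    KL μ (fun x => (1 + ε * d x) * ν x) ≤ KL μ ν - ε ^ 2 / 2 := by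
  have hc : ∀ x, 0 < 1 + ε * d x := by
    intro x
    obtain ⟨h1, h2⟩ := hd x
    nlinarith
  refine ⟨?_, ?_, ?_⟩
  · intro x
    exact mul_nonneg (hc x).le (hν0 x)
  · have : ∑ x, (1 + ε * d x) * ν x = ∑ x, (ν x + ε * (d x * ν x)) := by
      apply Finset.sum_congr rfl; intro x _; ring
    rw [this, Finset.sum_add_distrib, ← Finset.mul_sum, hmeanν, hν1]
    ring
  · -- main inequality
    have key : KL μ (fun x => (1 + ε * d x) * ν x)
        = KL μ ν - ∑ x, μ x * Real.log (1 + ε * d x) := by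
      unfold KL
      rw [← Finset.sum_sub_distrib]
      apply Finset.sum_congr rfl
      intro x _
      by_cases hμx : μ x = 0
      · simp [hμx]
      · have hνx : 0 < ν x := lt_of_le_of_ne (hν0 x) (fun h => hμx (hac x h.symm))
        have hcx := hc x
        rw [div_mul_eq_div_div_swap, Real.log_div (div_ne_zero hμx (ne_of_gt hνx)) (ne_of_gt hcx)]
        ring
    rw [key]
    have chord : ∀ x, μ x * ((1 + d x)/2 * Real.log (1+ε) + (1 - d x)/2 * Real.log (1-ε))
        ≤ μ x * Real.log (1 + ε * d x) := by
      intro x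
      apply mul_le_mul_of_nonneg_left _ (hμ0 x)
      obtain ⟨h1, h2⟩ := hd x
      have hcon := strictConcaveOn_log_Ioi.concaveOn
      have := hcon.2 (Set.mem_Ioi.2 (by linarith : (0:ℝ) < 1 + ε))
        (Set.mem_Ioi.2 (by linarith : (0:ℝ) < 1 - ε))
        (by linarith : (0:ℝ) ≤ (1 + d x)/2) (by linarith : (0:ℝ) ≤ (1 - d x)/2)
        (by ring : (1 + d x)/2 + (1 - d x)/2 = 1)
      simp only [smul_eq_mul] at this
      have harg : (1 + d x)/2 * (1 + ε) + (1 - d x)/2 * (1 - ε) = 1 + ε * d x := by ring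
      rw [harg] at this
      exact this
    have hsum : (Real.log (1+ε) + Real.log (1-ε))/2
        + (Real.log (1+ε) - Real.log (1-ε))/2 * (∑ x, d x * μ x)
        ≤ ∑ x, μ x * Real.log (1 + ε * d x) := by
      calc (Real.log (1+ε) + Real.log (1-ε))/2
            + (Real.log (1+ε) - Real.log (1-ε))/2 * (∑ x, d x * μ x)
          = ∑ x, μ x * ((1 + d x)/2 * Real.log (1+ε) + (1 - d x)/2 * Real.log (1-ε)) := by
            have : ∀ x, μ x * ((1 + d x)/2 * Real.log (1+ε) + (1 - d x)/2 * Real.log (1-ε))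
                = (Real.log (1+ε) + Real.log (1-ε))/2 * μ x
                  + (Real.log (1+ε) - Real.log (1-ε))/2 * (d x * μ x) := by
              intro x; ring
            rw [Finset.sum_congr rfl (fun x _ => this x), Finset.sum_add_distrib,
              ← Finset.mul_sum, ← Finset.mul_sum, hμ1]
            ring
        _ ≤ _ := Finset.sum_le_sum (fun x _ => chord x)
    have hlr : 2 * ε < Real.log (1+ε) - Real.log (1-ε) := log_ratio_gt ε hε0 hε1
    have hent := entropy_bound_s17 ε hε0 hε1
    have hS := hmeanμ
    have : ε ^ 2 / 2 ≤ ∑ x, μ x * Real.log (1 + ε * d x) := by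
      have h1 : (Real.log (1+ε) + Real.log (1-ε))/2
          + (Real.log (1+ε) - Real.log (1-ε))/2 * ε
          ≤ (Real.log (1+ε) + Real.log (1-ε))/2
          + (Real.log (1+ε) - Real.log (1-ε))/2 * (∑ x, d x * μ x) := by
        apply add_le_add_right
        apply mul_le_mul_of_nonneg_left hS
        nlinarith
      nlinarith [hsum, h1, hent]
    linarith
end
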